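/- Let G be a countable group. Then: (i) the AC-center AC(G) and the inner radical I(G) are amenable characteristic subgroups of G; (ii) AC(G) ≤ I(G); (iii) the actions AC(G)⋊G ↷ AC(G) and I(G)⋊G ↷ I(G) are amenable; (iv) G/C_G(AC(G)) is residually amenable; (v) if I(G) is infinite then G is inner amenable. -/

import Mathlib

open Pointwise

/-- A mean on `X`: a finitely additive probability measure defined on all subsets of `X`. -/
structure Mean (X : Type*) where
  m : Set X → ℝ
  nonneg : ∀ A : Set X, 0 ≤ m A
  total : m Set.univ = 1
  fin_add : ∀ A B : Set X, Disjoint A B → m (A ∪ B) = m A + m B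

/-- A mean on a `G`-set `X` is invariant if it is preserved by the action of every `g ∈ G`. -/
def MeanInvariant (G : Type*) [Group G] {X : Type*} [MulAction G X] (m : Mean X) : Prop :=
  ∀ (g : G) (A : Set X), m.m ((fun x => g • x) '' A) = m.m A

/-- The action of `G` on `X` is amenable: there is a `G`-invariant mean on `X`. -/
def AmenableAction (G : Type*) [Group G] (X : Type*) [MulAction G X] : Prop :=
  ∃ m : Mean X, MeanInvariant G m

/-- A group is amenable if its left translation action on itself admits an invariant mean. -/
def AmenableGroup (G : Type*) [Group G] : Prop :=
  ∃ m : Mean G, ∀ (g : G) (A : Set G), m.m ((fun x => g * x) '' A) = m.m A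

/-- `H` is `L`-q-normal in `M` if `{g ∈ M : gHg⁻¹ ∩ H ∈ L}` generates `M`. -/
def IsLQNormal {G : Type*} [Group G] (L : Subgroup G → Prop) (H M : Subgroup G) : Prop :=
  H ≤ M ∧
    Subgroup.closure
      {g : G | g ∈ M ∧ L (Subgroup.map (MulAut.conj g).toMonoidHom H ⊓ H)} = M

/-- `H` is `L`-wq-normal in `M`: there is an increasing ordinal-indexed chain from `H` to `M`
whose unions of initial segments are `L`-q-normal at every stage. -/
def IsLWQNormal {G : Type*} [Group G] (L : Subgroup G → Prop) (H M : Subgroup G) : Prop :=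
  ∃ (lam : Ordinal.{0}) (c : Ordinal.{0} → Subgroup G),
    (∀ α β : Ordinal.{0}, α ≤ β → β ≤ lam → c α ≤ c β) ∧
    c 0 = H ∧ c lam = M ∧
    ∀ α : Ordinal.{0}, 0 < α → α ≤ lam →
      IsLQNormal L (⨆ (β : Ordinal.{0}) (_ : β < α), c β) (c α)

/-- q*-normality: `{g ∈ M : gHg⁻¹ ∩ H nonamenable}` generates `M`. -/
def IsQStarNormal {G : Type*} [Group G] (H M : Subgroup G) : Prop :=
  IsLQNormal (fun K => ¬ AmenableGroup ↥K) H M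

/-- wq*-normality. -/
def IsWQStarNormal {G : Type*} [Group G] (H M : Subgroup G) : Prop :=
  IsLWQNormal (fun K => ¬ AmenableGroup ↥K) H M

/-- q-normality: `{g ∈ M : gHg⁻¹ ∩ H infinite}` generates `M`. -/
def IsQNormal {G : Type*} [Group G] (H M : Subgroup G) : Prop :=
  IsLQNormal (fun K => ((K : Set G)).Infinite) H M

/-- wq-normality. -/
def IsWQNormal {G : Type*} [Group G] (H M : Subgroup G) : Prop :=
  IsLWQNormal (fun K => ((K : Set G)).Infinite) H M

/-- `n`-degree `L`-wq-normality in `G`: `L₀ = L`, `L_{n+1} = {H : H is Lₙ-wq-normal in G}`. -/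
def NDegLWQNormal {G : Type*} [Group G] (L : Subgroup G → Prop) : ℕ → Subgroup G → Prop
  | 0, H => L H
  | n + 1, H => IsLWQNormal (NDegLWQNormal L n) H ⊤

/-- The isoperimetric constant `φ_S(X)` of a `G`-set `X` with respect to a finite `S ⊆ G`. -/
noncomputable def phiConst {G : Type*} [Group G] (S : Finset G) (X : Type*) [MulAction G X] :
    ℝ :=
  sInf {r : ℝ | ∃ P : Finset X, P.Nonempty ∧
    r = (∑ s ∈ S, (((s • (P : Set X)) \ (P : Set X)).ncard : ℝ)) / (P.card : ℝ)}


/-- `G` is inner amenable: there is an atomless mean on `G` invariant under conjugation. -/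
def InnerAmenable (G : Type*) [Group G] : Prop :=
  ∃ m : Mean G, (∀ g : G, m.m {g} = 0) ∧
    ∀ (g : G) (A : Set G), m.m ((fun x => g * x * g⁻¹) '' A) = m.m A

/-- Amenability of the action `N ⋊ G ↷ N` (for `N ≤ G`): there is a mean on `G`
concentrated on `N` which is invariant under left translation by elements of `N` and under
conjugation by all elements of `G`. -/
def SemidirectAmenable {G : Type*} [Group G] (N : Subgroup G) : Prop :=
  ∃ m : Mean G, m.m (N : Set G) = 1 ∧
    (∀ n ∈ N, ∀ A : Set G, m.m ((fun x => n * x) '' A) = m.m A) ∧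
    (∀ (g : G) (A : Set G), m.m ((fun x => g * x * g⁻¹) '' A) = m.m A)

/-- Amenability of the quotient group `G ⧸ K` (meaningful when `K` is normal). -/
def AmenableQuotientBy {G : Type*} [Group G] (K : Subgroup G) : Prop :=
  ∀ [_instN : K.Normal], AmenableGroup (G ⧸ K)

/-- The AC-center of `G`: the subgroup generated by all normal subgroups `N` of `G` with
`G/C_G(N)` amenable. -/
def ACCenter (G : Type*) [Group G] : Subgroup G :=
  Subgroup.closure
    (⋃ N ∈ {N : Subgroup G | N.Normal ∧
        AmenableQuotientBy (Subgroup.centralizer (N : Set G))}, (N : Set G))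

/-- The inner radical of `G`: the subgroup generated by all normal subgroups `N` of `G`
such that the action `N ⋊ G ↷ N` is amenable. -/
def InnerRadical (G : Type*) [Group G] : Subgroup G :=
  Subgroup.closure
    (⋃ N ∈ {N : Subgroup G | N.Normal ∧ SemidirectAmenable N}, (N : Set G))

/-- A mean on `G` invariant under conjugation. -/
def ConjInvMean {G : Type*} [Group G] (m : Mean G) : Prop :=
  ∀ (g : G) (A : Set G), m.m ((fun x => g * x * g⁻¹) '' A) = m.m A

universe u

/-- A group is residually amenable if every nonidentity element has a homomorphism to an
amenable group not killing it. -/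
def ResiduallyAmenable (G : Type u) [Group G] : Prop :=
  ∀ g : G, g ≠ 1 → ∃ A : GrpCat.{u}, AmenableGroup A ∧ ∃ f : G →* A, f g ≠ 1


section MeanBasics

variable {X : Type*}

theorem Mean.empty (m : Mean X) : m.m ∅ = 0 := by
  have h := m.fin_add ∅ Set.univ (by simp)
  simp only [Set.empty_union] at h
  linarith [m.total]

theorem Mean.mono (m : Mean X) {A B : Set X} (h : A ⊆ B) : m.m A ≤ m.m B := by
  have hd : Disjoint A (B \ A) := Set.disjoint_sdiff_right.mono_left le_rfl
  have h2 := m.fin_add A (B \ A) hd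
  rw [Set.union_diff_cancel h] at h2
  have := m.nonneg (B \ A)
  linarith

theorem Mean.le_one (m : Mean X) (A : Set X) : m.m A ≤ 1 := by
  have := m.mono (Set.subset_univ A); rw [m.total] at this; exact this

theorem Mean.compl (m : Mean X) (A : Set X) : m.m Aᶜ = 1 - m.m A := by
  have h := m.fin_add A Aᶜ disjoint_compl_right
  rw [Set.union_compl_self, m.total] at h
  linarith

/-- If `m S = 1` then `m` is concentrated on `S`. -/
theorem Mean.inter_of_one (m : Mean X) {S : Set X} (hS : m.m S = 1) (A : Set X) :
    m.m (A ∩ S) = m.m A := by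
  have h := m.fin_add (A ∩ S) (A \ S) (Set.disjoint_sdiff_right.mono_left Set.inter_subset_right)
  rw [Set.inter_union_diff] at h
  have h2 : m.m (A \ S) ≤ m.m Sᶜ := m.mono (fun x hx => hx.2)
  rw [m.compl, hS] at h2
  have := m.nonneg (A \ S)
  linarith

theorem Mean.of_subset_one (m : Mean X) {S A : Set X} (hS : m.m S = 1) (h : S ⊆ A) :
    m.m A = 1 := le_antisymm (m.le_one A) (hS ▸ m.mono h)

end MeanBasics

section ULim

open Filter Topology

open Classical in
/-- Limit of a `[0,1]`-valued family along an ultrafilter. -/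
noncomputable def uLim {ι : Type*} (u : Ultrafilter ι) (f : ι → ℝ) : ℝ :=
  if h : ∃ r, Tendsto f ↑u (𝓝 r) then h.choose else 0

theorem uLim_spec {ι : Type*} (u : Ultrafilter ι) (f : ι → ℝ)
    (hf : ∀ i, f i ∈ Set.Icc (0:ℝ) 1) : Tendsto f ↑u (𝓝 (uLim u f)) := by
  have hc : IsCompact (Set.Icc (0:ℝ) 1) := isCompact_Icc
  have hu : ↑(u.map f) ≤ Filter.principal (Set.Icc (0:ℝ) 1) := by
    simp only [Ultrafilter.coe_map, Filter.le_principal_iff, Filter.mem_map]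
    exact Filter.mem_of_superset Filter.univ_mem (fun i _ => hf i)
  obtain ⟨r, _, hr⟩ := isCompact_iff_ultrafilter_le_nhds.1 hc (u.map f) hu
  have hex : ∃ r, Tendsto f ↑u (𝓝 r) := ⟨r, hr⟩
  classical
  rw [uLim, dif_pos hex]
  exact hex.choose_spec

theorem uLim_eq {ι : Type*} (u : Ultrafilter ι) {f : ι → ℝ} {r : ℝ}
    (hf : ∀ i, f i ∈ Set.Icc (0:ℝ) 1) (h : Tendsto f ↑u (𝓝 r)) : uLim u f = r :=
  tendsto_nhds_unique (uLim_spec u f hf) h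

/-- Ultrafilter limit of a family of means. -/
noncomputable def limitMean {ι : Type*} (u : Ultrafilter ι) (ms : ι → Mean X) : Mean X where
  m A := uLim u (fun i => (ms i).m A)
  nonneg A := ge_of_tendsto (uLim_spec u _ (fun i => ⟨(ms i).nonneg A, (ms i).le_one A⟩))
    (Filter.Eventually.of_forall fun i => (ms i).nonneg A)
  total := uLim_eq u (fun i => ⟨(ms i).nonneg _, (ms i).le_one _⟩)
    (by simpa only [Mean.total] using tendsto_const_nhds)
  fin_add A B hd := by
    have hA := uLim_spec u (fun i => (ms i).m A) (fun i => ⟨(ms i).nonneg A, (ms i).le_one A⟩)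
    have hB := uLim_spec u (fun i => (ms i).m B) (fun i => ⟨(ms i).nonneg B, (ms i).le_one B⟩)
    exact uLim_eq u (fun i => ⟨(ms i).nonneg _, (ms i).le_one _⟩)
      (by simpa only [Mean.fin_add _ A B hd] using hA.add hB)

theorem limitMean_apply {ι X : Type*} (u : Ultrafilter ι) (ms : ι → Mean X) (A : Set X) :
    (limitMean u ms).m A = uLim u (fun i => (ms i).m A) := rfl

/-- If the values eventually agree along the ultrafilter, the limit mean values agree. -/
theorem limitMean_congr {ι : Type*} (u : Ultrafilter ι) (ms : ι → Mean X) {A B : Set X}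
    (h : ∀ᶠ i in ↑u, (ms i).m A = (ms i).m B) :
    (limitMean u ms).m A = (limitMean u ms).m B := by
  have hA := uLim_spec u (fun i => (ms i).m A) (fun i => ⟨(ms i).nonneg A, (ms i).le_one A⟩)
  exact uLim_eq u (fun i => ⟨(ms i).nonneg _, (ms i).le_one _⟩) (hA.congr' h) |>.symm |>.trans rfl

theorem limitMean_eq_one {ι : Type*} (u : Ultrafilter ι) (ms : ι → Mean X) {A : Set X}
    (h : ∀ᶠ i in ↑u, (ms i).m A = 1) : (limitMean u ms).m A = 1 := by
  refine uLim_eq u (f := fun i => (ms i).m A) (fun i => ⟨(ms i).nonneg _, (ms i).le_one _⟩) ?_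
  exact Filter.Tendsto.congr' (h.mono fun i hi => hi.symm) tendsto_const_nhds

end ULim

section Integ

variable {Q : Type*}

/-- The layer function of `f` under the mean `m`. -/
noncomputable def layer (m : Mean Q) (f : Q → ℝ) (t : ℝ) : ℝ := m.m {q | t ≤ f q}

/-- The integral of `f` against the mean `m` (layer-cake formula). -/
noncomputable def integ (m : Mean Q) (f : Q → ℝ) : ℝ := ∫ t in (0:ℝ)..1, layer m f t

theorem layer_anti (m : Mean Q) (f : Q → ℝ) : Antitone (layer m f) :=
  fun s t hst => m.mono (fun q hq => le_trans hst hq)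

theorem layer_nonneg (m : Mean Q) (f : Q → ℝ) (t : ℝ) : 0 ≤ layer m f t := m.nonneg _

theorem layer_le_one (m : Mean Q) (f : Q → ℝ) (t : ℝ) : layer m f t ≤ 1 := m.le_one _

theorem layer_intble (m : Mean Q) (f : Q → ℝ) (a b : ℝ) :
    IntervalIntegrable (layer m f) MeasureTheory.volume a b :=
  (layer_anti m f).intervalIntegrable

theorem integ_nonneg (m : Mean Q) (f : Q → ℝ) : 0 ≤ integ m f :=
  intervalIntegral.integral_nonneg zero_le_one (fun t _ => layer_nonneg m f t)

theorem integ_le_one (m : Mean Q) (f : Q → ℝ) : integ m f ≤ 1 := by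
  have h := intervalIntegral.integral_mono_on (μ := MeasureTheory.volume) zero_le_one
    (layer_intble m f 0 1) (intervalIntegrable_const (c := (1:ℝ)))
    (fun t _ => layer_le_one m f t)
  simpa [integ] using h

/-- An antitone function vanishing on `(a, ∞)` has zero integral on `a..b`. -/
theorem integral_zero_of_tail {h : ℝ → ℝ} {a b : ℝ} (hab : a ≤ b) (hanti : Antitone h)
    (h0 : ∀ t, 0 ≤ h t) (h1 : ∀ t, h t ≤ 1) (hz : ∀ t, a < t → h t = 0) :
    ∫ t in a..b, h t = 0 := by
  rcases eq_or_lt_of_le hab with rfl | hlt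
  · simp
  refine le_antisymm ?_ (intervalIntegral.integral_nonneg hab (fun t _ => h0 t))
  refine le_of_forall_pos_le_add ?_
  intro ε hε
  set δ : ℝ := min ε (b - a) with hδdef
  have hδpos : 0 < δ := lt_min hε (by linarith)
  have hδb : a + δ ≤ b := by
    have : δ ≤ b - a := min_le_right _ _
    linarith
  have hsplit : (∫ t in a..(a+δ), h t) + (∫ t in (a+δ)..b, h t) = ∫ t in a..b, h t :=
    intervalIntegral.integral_add_adjacent_intervals
      hanti.intervalIntegrable hanti.intervalIntegrable
  have h2 : (∫ t in (a+δ)..b, h t) = 0 := by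
    rw [intervalIntegral.integral_congr (g := fun _ => (0:ℝ))
      (fun t ht => by
        rw [Set.uIcc_of_le hδb] at ht
        exact hz t (by linarith [ht.1]))]
    simp
  have h3 : (∫ t in a..(a+δ), h t) ≤ δ := by
    have := intervalIntegral.integral_mono_on (μ := MeasureTheory.volume)
      (by linarith : a ≤ a + δ) hanti.intervalIntegrable
      (intervalIntegrable_const (c := (1:ℝ))) (fun t _ => h1 t)
    simpa using this
  have hδε : δ ≤ ε := min_le_left _ _
  linarith

theorem integ_shift_le (m : Mean Q) {f g : Q → ℝ} {c : ℝ} (hc : 0 ≤ c)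
    (h : ∀ q, f q ≤ g q + c) : integ m f ≤ integ m g + c := by
  rcases le_or_gt c 1 with hc1 | hc1
  · have hlay : ∀ t, layer m f t ≤ layer m g (t - c) := by
      intro t
      exact m.mono (fun q hq => by simp only [Set.mem_setOf_eq] at *; linarith [h q])
    have hanti : Antitone (fun t => layer m g (t - c)) :=
      fun s t hst => (layer_anti m g) (by linarith)
    have h1 : integ m f ≤ ∫ t in (0:ℝ)..1, layer m g (t - c) :=
      intervalIntegral.integral_mono_on zero_le_one (layer_intble m f 0 1)
        hanti.intervalIntegrable (fun t _ => hlay t)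
    have h2 : (∫ t in (0:ℝ)..1, layer m g (t - c)) = ∫ t in (-c)..(1-c), layer m g t := by
      rw [intervalIntegral.integral_comp_sub_right (layer m g) c]
      norm_num
    have h3 : (∫ t in (-c)..(1-c), layer m g t)
        = (∫ t in (-c)..(0:ℝ), layer m g t) + ∫ t in (0:ℝ)..(1-c), layer m g t :=
      (intervalIntegral.integral_add_adjacent_intervals (layer_intble m g _ _)
        (layer_intble m g _ _)).symm
    have h4 : (∫ t in (-c)..(0:ℝ), layer m g t) ≤ c := by
      have := intervalIntegral.integral_mono_on (μ := MeasureTheory.volume)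
        (by linarith : -c ≤ 0) (layer_intble m g _ _)
        (intervalIntegrable_const (c := (1:ℝ))) (fun t _ => layer_le_one m g t)
      simpa using this
    have h5 : (∫ t in (0:ℝ)..(1-c), layer m g t) ≤ integ m g := by
      have hsplit : (∫ t in (0:ℝ)..(1-c), layer m g t) + (∫ t in (1-c)..(1:ℝ), layer m g t)
          = integ m g :=
        intervalIntegral.integral_add_adjacent_intervals (layer_intble m g _ _)
          (layer_intble m g _ _)
      have : 0 ≤ ∫ t in (1-c)..(1:ℝ), layer m g t :=
        intervalIntegral.integral_nonneg (by linarith) (fun t _ => layer_nonneg m g t)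
      linarith
    linarith
  · have := integ_le_one m f
    have := integ_nonneg m g
    linarith

theorem integ_mono (m : Mean Q) {f g : Q → ℝ} (h : ∀ q, f q ≤ g q) :
    integ m f ≤ integ m g := by
  have := integ_shift_le m (le_refl (0:ℝ)) (f := f) (g := g) (fun q => by linarith [h q])
  linarith

theorem integ_congr_layers (m : Mean Q) {f g : Q → ℝ}
    (h : ∀ t, m.m {q | t ≤ f q} = m.m {q | t ≤ g q}) : integ m f = integ m g := by
  unfold integ layer
  exact intervalIntegral.integral_congr (fun t _ => h t)

theorem integ_congr_ae (m : Mean Q) {f g : Q → ℝ} {S : Set Q} (hS : m.m S = 1)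
    (h : ∀ q ∈ S, f q = g q) : integ m f = integ m g := by
  refine integ_congr_layers m (fun t => ?_)
  rw [← m.inter_of_one hS {q | t ≤ f q}, ← m.inter_of_one hS {q | t ≤ g q}]
  congr 1
  ext q
  simp only [Set.mem_inter_iff, Set.mem_setOf_eq]
  exact ⟨fun ⟨h1, h2⟩ => ⟨(h q h2) ▸ h1, h2⟩, fun ⟨h1, h2⟩ => ⟨(h q h2) ▸ h1, h2⟩⟩

theorem integ_eq_one (m : Mean Q) {f : Q → ℝ} {S : Set Q} (hf0 : ∀ q, 0 ≤ f q)
    (hS : m.m S = 1) (hfS : ∀ q ∈ S, 1 ≤ f q) : integ m f = 1 := by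
  have : ∀ t ∈ Set.uIcc (0:ℝ) 1, layer m f t = (fun _ => (1:ℝ)) t := by
    intro t ht
    rw [Set.uIcc_of_le zero_le_one] at ht
    rcases le_or_gt t 0 with ht0 | ht0
    · have : {q | t ≤ f q} = Set.univ := Set.eq_univ_iff_forall.2 (fun q => le_trans ht0 (hf0 q))
      simp [layer, this, m.total]
    · refine le_antisymm (layer_le_one m f t) ?_
      calc (1:ℝ) = m.m S := hS.symm
      _ ≤ layer m f t := m.mono (fun q hq => le_trans ht.2 (hfS q hq))
  rw [integ, intervalIntegral.integral_congr this]
  simp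

theorem integ_zero (m : Mean Q) : integ m (fun _ => (0:ℝ)) = 0 := by
  refine integral_zero_of_tail zero_le_one (layer_anti m _) (layer_nonneg m _)
    (layer_le_one m _) (fun t ht => ?_)
  have : {q : Q | t ≤ (0:ℝ)} = ∅ := by
    ext q; simp only [Set.mem_setOf_eq, Set.mem_empty_iff_false, iff_false, not_le]; linarith
  simp [layer, this, m.empty]

/-- Key step: adding `c` on a set `A` adds `c * m A` to the integral. -/
theorem integ_add_indicator (m : Mean Q) {f : Q → ℝ} {c : ℝ} {A : Set Q}
    (hf0 : ∀ q, 0 ≤ f q) (hc : 0 ≤ c) (hc1 : c ≤ 1)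
    (hbound : ∀ q ∈ A, f q + c ≤ 1) :
    integ m (fun q => f q + A.indicator (fun _ => c) q) = integ m f + c * m.m A := by
  set G1 : ℝ → ℝ := fun t => m.m ({q | t ≤ f q} ∩ Aᶜ) with hG1
  set G2 : ℝ → ℝ := fun t => m.m ({q | t ≤ f q} ∩ A) with hG2
  have hG1anti : Antitone G1 := fun s t hst =>
    m.mono (Set.inter_subset_inter_left _ (fun q hq => le_trans hst hq))
  have hG2anti : Antitone G2 := fun s t hst =>
    m.mono (Set.inter_subset_inter_left _ (fun q hq => le_trans hst hq))
  have hG2nonneg : ∀ t, 0 ≤ G2 t := fun t => m.nonneg _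
  have hG2le : ∀ t, G2 t ≤ 1 := fun t => m.le_one _
  -- Step 0: layer decomposition
  have step0 : ∀ t, layer m (fun q => f q + A.indicator (fun _ => c) q) t
      = G1 t + G2 (t - c) := by
    intro t
    have hset : {q | t ≤ f q + A.indicator (fun _ => c) q}
        = ({q | t ≤ f q} ∩ Aᶜ) ∪ ({q | t - c ≤ f q} ∩ A) := by
      ext q
      by_cases hq : q ∈ A
      · simp only [Set.mem_setOf_eq, Set.indicator_of_mem hq, Set.mem_union,
          Set.mem_inter_iff, Set.mem_compl_iff, hq, not_true, and_false, false_or,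
          and_true]
        constructor <;> intro h <;> linarith
      · simp only [Set.mem_setOf_eq, Set.indicator_of_notMem hq, Set.mem_union,
          Set.mem_inter_iff, Set.mem_compl_iff, hq, not_false_iff, and_true, and_false,
          or_false, add_zero]
    have hdisj : Disjoint ({q | t ≤ f q} ∩ Aᶜ) ({q | t - c ≤ f q} ∩ A) :=
      Set.disjoint_left.2 (fun q hq1 hq2 => hq1.2 hq2.2)
    rw [layer, hset, m.fin_add _ _ hdisj]
  -- Step 1
  have hshiftanti : Antitone (fun t => G2 (t - c)) := fun s t hst => hG2anti (by linarith)
  have step1 : integ m (fun q => f q + A.indicator (fun _ => c) q)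
      = (∫ t in (0:ℝ)..1, G1 t) + ∫ t in (0:ℝ)..1, G2 (t - c) := by
    rw [integ, intervalIntegral.integral_congr
      (g := fun t => G1 t + G2 (t - c)) (fun t _ => step0 t)]
    exact intervalIntegral.integral_add hG1anti.intervalIntegrable
      hshiftanti.intervalIntegrable
  -- Step 2
  have step2 : (∫ t in (0:ℝ)..1, G2 (t - c))
      = (∫ t in (-c)..(0:ℝ), G2 t) + ∫ t in (0:ℝ)..(1-c), G2 t := by
    have hadj : (∫ t in (-c)..(0:ℝ), G2 t) + (∫ t in (0:ℝ)..(1-c), G2 t)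
        = ∫ t in (-c)..(1-c), G2 t :=
      intervalIntegral.integral_add_adjacent_intervals
        hG2anti.intervalIntegrable hG2anti.intervalIntegrable
    rw [intervalIntegral.integral_comp_sub_right G2 c, show (0:ℝ)-c = -c by ring, ← hadj]
  -- Step 3
  have step3 : (∫ t in (-c)..(0:ℝ), G2 t) = c * m.m A := by
    have : ∀ t ∈ Set.uIcc (-c) (0:ℝ), G2 t = (fun _ => m.m A) t := by
      intro t ht
      rw [Set.uIcc_of_le (by linarith : -c ≤ (0:ℝ))] at ht
      have : {q | t ≤ f q} = Set.univ :=
        Set.eq_univ_iff_forall.2 (fun q => le_trans ht.2 (hf0 q))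
      simp [hG2, this]
    rw [intervalIntegral.integral_congr this]
    simp [mul_comm]
  -- Step 4
  have step4 : (∫ t in (0:ℝ)..(1-c), G2 t) = (∫ t in (0:ℝ)..1, G2 t) := by
    have hz : (∫ t in (1-c)..(1:ℝ), G2 t) = 0 := by
      refine integral_zero_of_tail (by linarith) hG2anti hG2nonneg hG2le (fun t ht => ?_)
      have : {q | t ≤ f q} ∩ A = ∅ := by
        ext q
        simp only [Set.mem_inter_iff, Set.mem_setOf_eq, Set.mem_empty_iff_false, iff_false,
          not_and]
        intro hle hqA
        have := hbound q hqA
        linarith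
      simp [hG2, this, m.empty]
    have := intervalIntegral.integral_add_adjacent_intervals
      (hG2anti.intervalIntegrable (a := (0:ℝ)) (b := 1-c) (μ := MeasureTheory.volume))
      (hG2anti.intervalIntegrable (a := (1-c:ℝ)) (b := 1) (μ := MeasureTheory.volume))
    rw [hz] at this
    linarith
  -- Step 5
  have step5 : (∫ t in (0:ℝ)..1, G1 t) + (∫ t in (0:ℝ)..1, G2 t) = integ m f := by
    rw [← intervalIntegral.integral_add hG1anti.intervalIntegrable hG2anti.intervalIntegrable]
    refine intervalIntegral.integral_congr (fun t _ => ?_)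
    have hdisj : Disjoint ({q | t ≤ f q} ∩ Aᶜ) ({q | t ≤ f q} ∩ A) :=
      Set.disjoint_left.2 (fun q hq1 hq2 => hq1.2 hq2.2)
    have hun : ({q | t ≤ f q} ∩ Aᶜ) ∪ ({q | t ≤ f q} ∩ A) = {q | t ≤ f q} := by
      rw [← Set.inter_union_distrib_left, Set.compl_union_self, Set.inter_univ]
    rw [layer, ← hun, m.fin_add _ _ hdisj]
  rw [step1, step2, step3, step4]
  linarith

theorem integ_add (m : Mean Q) {f g : Q → ℝ} (hf0 : ∀ q, 0 ≤ f q) (hg0 : ∀ q, 0 ≤ g q)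
    (hfg1 : ∀ q, f q + g q ≤ 1) :
    integ m (fun q => f q + g q) = integ m f + integ m g := by
  classical
  have key : ∀ n : ℕ, 1 ≤ n →
      |integ m (fun q => f q + g q) - integ m f - integ m g| ≤ 2 / n := by
    intro n hn
    have hnR : (1:ℝ) ≤ (n:ℝ) := by exact_mod_cast hn
    have hnpos : (0:ℝ) < (n:ℝ) := by linarith
    set A : ℕ → Set Q := fun k => {q | (k:ℝ)/(n:ℝ) ≤ g q} with hA
    have hAmem : ∀ k q, q ∈ A k ↔ (k:ℝ)/(n:ℝ) ≤ g q := fun k q => Iff.rfl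
    set gn : Q → ℝ := fun q => ∑ k ∈ Finset.Icc 1 n, (A k).indicator (fun _ => 1/(n:ℝ)) q
      with hgn
    set Sn : ℝ := ∑ k ∈ Finset.Icc 1 n, (1/(n:ℝ)) * m.m (A k) with hSn
    have hgn0 : ∀ q, 0 ≤ gn q := fun q =>
      Finset.sum_nonneg (fun k _ => Set.indicator_nonneg (fun _ _ => by positivity) q)
    -- iterated indicator addition
    have iter : ∀ (F : Q → ℝ), (∀ q, 0 ≤ F q) → (∀ q, F q + g q ≤ 1) →
        ∀ j, j ≤ n →
        integ m (fun q => F q + ∑ k ∈ Finset.Icc 1 j, (A k).indicator (fun _ => 1/(n:ℝ)) q)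
          = integ m F + ∑ k ∈ Finset.Icc 1 j, (1/(n:ℝ)) * m.m (A k) := by
      intro F hF0 hF1 j
      induction j with
      | zero => intro _; simp
      | succ j ih =>
        intro hj
        have hj' : j ≤ n := le_trans (Nat.le_succ j) hj
        have hins : Finset.Icc 1 (j+1) = insert (j+1) (Finset.Icc 1 j) := by
          ext k; simp only [Finset.mem_Icc, Finset.mem_insert]; omega
        have hnotmem : (j+1) ∉ Finset.Icc 1 j := by simp
        have hnest : ∀ q, q ∈ A (j+1) → ∀ k, k ∈ Finset.Icc 1 j → q ∈ A k := by
          intro q hq k hk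
          rw [Finset.mem_Icc] at hk
          rw [hAmem] at hq ⊢
          refine le_trans ?_ hq
          gcongr
          exact_mod_cast Nat.le_succ_of_le hk.2
        have hFj0 : ∀ q, 0 ≤ F q + ∑ k ∈ Finset.Icc 1 j, (A k).indicator (fun _ => 1/(n:ℝ)) q :=
          fun q => add_nonneg (hF0 q)
            (Finset.sum_nonneg (fun k _ => Set.indicator_nonneg (fun _ _ => by positivity) q))
        have hbound : ∀ q ∈ A (j+1),
            (F q + ∑ k ∈ Finset.Icc 1 j, (A k).indicator (fun _ => 1/(n:ℝ)) q) + 1/(n:ℝ) ≤ 1 := by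
          intro q hq
          have hsum : (∑ k ∈ Finset.Icc 1 j, (A k).indicator (fun _ => 1/(n:ℝ)) q)
              = (j:ℝ) * (1/(n:ℝ)) := by
            rw [Finset.sum_congr rfl (fun k hk => Set.indicator_of_mem (hnest q hq k hk) _)]
            rw [Finset.sum_const, Nat.card_Icc, nsmul_eq_mul]
            norm_num
          have hgq : ((j:ℝ)+1)/(n:ℝ) ≤ g q := by
            have := (hAmem (j+1) q).1 hq
            push_cast at this
            exact this
          have := hF1 q
          rw [hsum]
          have hj1 : (j:ℝ) * (1/(n:ℝ)) + 1/(n:ℝ) = ((j:ℝ)+1)/(n:ℝ) := by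
            field_simp
          linarith [hj1 ▸ (by linarith : (j:ℝ) * (1/(n:ℝ)) + 1/(n:ℝ) ≤ ((j:ℝ)+1)/(n:ℝ) + 0)]
        have step := integ_add_indicator m (f := fun q =>
            F q + ∑ k ∈ Finset.Icc 1 j, (A k).indicator (fun _ => 1/(n:ℝ)) q)
          (c := 1/(n:ℝ)) (A := A (j+1)) hFj0 (by positivity)
          (by rw [div_le_one hnpos]; linarith) hbound
        have heq : (fun q => F q + ∑ k ∈ Finset.Icc 1 (j+1), (A k).indicator (fun _ => 1/(n:ℝ)) q)
            = fun q => (F q + ∑ k ∈ Finset.Icc 1 j, (A k).indicator (fun _ => 1/(n:ℝ)) q)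
              + (A (j+1)).indicator (fun _ => 1/(n:ℝ)) q := by
          funext q
          rw [hins, Finset.sum_insert hnotmem]
          ring
        rw [heq, step, ih hj', hins, Finset.sum_insert hnotmem]
        ring
    -- counting bounds
    have hcnt : ∀ q, gn q
        = (((Finset.Icc 1 n).filter (fun k => q ∈ A k)).card : ℝ) * (1/(n:ℝ)) := by
      intro q
      rw [hgn]
      simp only [Set.indicator_apply]
      rw [Finset.sum_ite, Finset.sum_const, Finset.sum_const_zero, add_zero, nsmul_eq_mul]
    have hgn_le : ∀ q, gn q ≤ g q := by
      intro q
      rw [hcnt q]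
      have hsub : (Finset.Icc 1 n).filter (fun k => q ∈ A k) ⊆ Finset.Icc 1 ⌊(n:ℝ) * g q⌋₊ := by
        intro k hk
        rw [Finset.mem_filter, Finset.mem_Icc] at hk
        rw [Finset.mem_Icc]
        refine ⟨hk.1.1, Nat.le_floor ?_⟩
        have := (hAmem k q).1 hk.2
        rw [div_le_iff₀ hnpos] at this
        linarith [this]
      have hcard : (((Finset.Icc 1 n).filter (fun k => q ∈ A k)).card : ℝ)
          ≤ (n:ℝ) * g q := by
        calc (((Finset.Icc 1 n).filter (fun k => q ∈ A k)).card : ℝ)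
            ≤ ((Finset.Icc 1 ⌊(n:ℝ) * g q⌋₊).card : ℝ) := by
              exact_mod_cast Finset.card_le_card hsub
          _ ≤ (⌊(n:ℝ) * g q⌋₊ : ℝ) := by
              rw [Nat.card_Icc]
              have : ⌊(n:ℝ) * g q⌋₊ + 1 - 1 = ⌊(n:ℝ) * g q⌋₊ := by omega
              rw [this]
          _ ≤ (n:ℝ) * g q := Nat.floor_le (mul_nonneg hnpos.le (hg0 q))
      calc (((Finset.Icc 1 n).filter (fun k => q ∈ A k)).card : ℝ) * (1/(n:ℝ))
          ≤ ((n:ℝ) * g q) * (1/(n:ℝ)) := by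
            apply mul_le_mul_of_nonneg_right hcard (by positivity)
        _ = g q := by field_simp
    have hg_le : ∀ q, g q ≤ gn q + 1/(n:ℝ) := by
      intro q
      set c := ((Finset.Icc 1 n).filter (fun k => q ∈ A k)).card with hc
      rcases le_or_gt n c with hcn | hcn
      · -- gn q = 1, and g q ≤ 1
        have hcn' : c ≤ n := le_trans (Finset.card_filter_le _ _) (by rw [Nat.card_Icc]; omega)
        have : c = n := le_antisymm hcn' hcn
        rw [hcnt q, ← hc, this]
        have : (n:ℝ) * (1/(n:ℝ)) = 1 := by field_simp
        rw [this]
        have h1 := hfg1 q; have h2 := hf0 q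
        have h3 : (0:ℝ) < 1/(n:ℝ) := by positivity
        linarith
      · have hclaim : ¬ (((c:ℝ)+1)/(n:ℝ) ≤ g q) := by
          intro hcl
          have hsub : Finset.Icc 1 (c+1) ⊆ (Finset.Icc 1 n).filter (fun k => q ∈ A k) := by
            intro k hk
            rw [Finset.mem_Icc] at hk
            rw [Finset.mem_filter, Finset.mem_Icc]
            refine ⟨⟨hk.1, by omega⟩, ?_⟩
            rw [hAmem]
            refine le_trans ?_ hcl
            have hk2 : (k:ℝ) ≤ (c:ℝ)+1 := by exact_mod_cast hk.2
            gcongr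
          have := Finset.card_le_card hsub
          rw [Nat.card_Icc] at this
          omega
        push_neg at hclaim
        rw [hcnt q, ← hc]
        have : (c:ℝ) * (1/(n:ℝ)) + 1/(n:ℝ) = ((c:ℝ)+1)/(n:ℝ) := by field_simp
        linarith [hclaim, this ▸ le_refl (((c:ℝ)+1)/(n:ℝ))]
    -- sandwich
    have h1 : integ m (fun q => f q + gn q) = integ m f + Sn :=
      iter f hf0 hfg1 n le_rfl
    have h2 : integ m gn = Sn := by
      have := iter (fun _ => (0:ℝ)) (fun _ => le_refl 0)
        (fun q => by simp only [zero_add]; linarith [hfg1 q, hf0 q]) n le_rfl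
      simp only [zero_add] at this
      rw [← hgn] at this
      rw [this, integ_zero, zero_add]
    have lowF : integ m f + Sn ≤ integ m (fun q => f q + g q) := by
      rw [← h1]
      exact integ_mono m (fun q => by linarith [hgn_le q])
    have highF : integ m (fun q => f q + g q) ≤ integ m f + Sn + 1/(n:ℝ) := by
      have := integ_shift_le m (f := fun q => f q + g q) (g := fun q => f q + gn q)
        (c := 1/(n:ℝ)) (by positivity) (fun q => by linarith [hg_le q])
      rw [h1] at this
      linarith
    have lowG : Sn ≤ integ m g := by
      rw [← h2]
      exact integ_mono m hgn_le
    have highG : integ m g ≤ Sn + 1/(n:ℝ) := by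
      have := integ_shift_le m (f := g) (g := gn) (c := 1/(n:ℝ)) (by positivity) hg_le
      rw [h2] at this
      linarith
    rw [abs_le]
    constructor
    · have : 2/(n:ℝ) = 1/(n:ℝ) + 1/(n:ℝ) := by ring
      rw [this]
      linarith
    · have : 2/(n:ℝ) = 1/(n:ℝ) + 1/(n:ℝ) := by ring
      linarith
  have h0 : |integ m (fun q => f q + g q) - integ m f - integ m g| ≤ 0 := by
    refine ge_of_tendsto (tendsto_const_div_atTop_nhds_zero_nat 2) ?_
    filter_upwards [Filter.eventually_ge_atTop 1] with n hn
    exact key n hn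
  have := abs_nonneg (integ m (fun q => f q + g q) - integ m f - integ m g)
  have : |integ m (fun q => f q + g q) - integ m f - integ m g| = 0 := le_antisymm h0 this
  have := abs_eq_zero.1 this
  linarith

end Integ


section MkMean

variable {Q X : Type*}

/-- Build a mean by integrating set-functions against a mean. -/
noncomputable def mkMean (μ : Mean Q) (F : Set X → Q → ℝ)
    (h0 : ∀ A q, 0 ≤ F A q) (h1 : ∀ A q, F A q ≤ 1)
    (huniv : ∀ q, F Set.univ q = 1)
    (hadd : ∀ A B, Disjoint A B → ∀ q, F (A ∪ B) q = F A q + F B q) : Mean X where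
  m A := integ μ (F A)
  nonneg A := integ_nonneg μ (F A)
  total := integ_eq_one μ (fun q => h0 _ q) μ.total (fun q _ => (huniv q).ge)
  fin_add A B hd := by
    show integ μ (F (A ∪ B)) = integ μ (F A) + integ μ (F B)
    rw [show F (A ∪ B) = fun q => F A q + F B q from funext (hadd A B hd)]
    exact integ_add μ (fun q => h0 A q) (fun q => h0 B q)
      (fun q => by rw [← hadd A B hd q]; exact h1 _ q)

theorem mkMean_apply (μ : Mean Q) (F : Set X → Q → ℝ) (h0 h1 huniv hadd) (A : Set X) :
    (mkMean μ F h0 h1 huniv hadd).m A = integ μ (F A) := rfl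

theorem limitMean_eq_of_tendsto_zero {ι : Type*} (u : Ultrafilter ι) (l : Filter ι)
    (hul : ↑u ≤ l) (ms : ι → Mean X) (A B : Set X)
    (h : Filter.Tendsto (fun i => (ms i).m A - (ms i).m B) l (nhds 0)) :
    (limitMean u ms).m A = (limitMean u ms).m B := by
  have hA := uLim_spec u (fun i => (ms i).m A) (fun i => ⟨(ms i).nonneg A, (ms i).le_one A⟩)
  have hB := uLim_spec u (fun i => (ms i).m B) (fun i => ⟨(ms i).nonneg B, (ms i).le_one B⟩)
  have hd := hA.sub hB
  have hd0 : Filter.Tendsto (fun i => (ms i).m A - (ms i).m B) ↑u (nhds 0) := h.mono_left hul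
  have := tendsto_nhds_unique hd hd0
  have hAB : (limitMean u ms).m A - (limitMean u ms).m B = 0 := this
  linarith [hAB]

end MkMean

section GroupHelpers

variable {G : Type*} [Group G]

theorem mem_lmul_image (g x : G) (A : Set G) :
    x ∈ (fun y => g * y) '' A ↔ g⁻¹ * x ∈ A := by
  constructor
  · rintro ⟨y, hy, rfl⟩; simpa using hy
  · intro h; exact ⟨g⁻¹ * x, h, by group⟩

theorem mem_conj_image (g x : G) (A : Set G) :
    x ∈ (fun y => g * y * g⁻¹) '' A ↔ g⁻¹ * x * g ∈ A := by
  constructor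
  · rintro ⟨y, hy, rfl⟩
    have hgy : g⁻¹ * (g * y * g⁻¹) * g = y := by group
    rwa [hgy]
  · intro h; exact ⟨g⁻¹ * x * g, h, by group⟩

/-- Relative amenability: a mean on `G` concentrated on `N` and `N`-translation invariant. -/
def RelMean {G : Type*} [Group G] (N : Subgroup G) : Prop :=
  ∃ m : Mean G, m.m (N : Set G) = 1 ∧
    ∀ n ∈ N, ∀ A : Set G, m.m ((fun x => n * x) '' A) = m.m A

/-- A subgroup that carries a relative mean is amenable as a group. -/
theorem RelMean.amenable {N : Subgroup G} (h : RelMean N) : AmenableGroup ↥N := by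
  obtain ⟨m, hm1, hminv⟩ := h
  refine ⟨⟨fun B => m.m ((fun b : ↥N => (b : G)) '' B),
    fun B => m.nonneg _,
    by simpa [Set.image_univ, Subtype.range_coe] using hm1,
    fun B C hd => by
      show m.m ((fun b : ↥N => (b : G)) '' (B ∪ C)) = _
      rw [Set.image_union]
      exact m.fin_add _ _ (Set.disjoint_image_of_injective Subtype.coe_injective hd)⟩,
    fun g B => ?_⟩
  have himg : ((fun b : ↥N => (b : G)) '' ((fun x => g * x) '' B))
      = (fun x => (g : G) * x) '' ((fun b : ↥N => (b : G)) '' B) := by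
    ext x
    simp only [Set.mem_image]
    constructor
    · rintro ⟨b, ⟨c, hc, rfl⟩, rfl⟩; exact ⟨c, ⟨c, hc, rfl⟩, rfl⟩
    · rintro ⟨y, ⟨c, hc, rfl⟩, rfl⟩; exact ⟨g * c, ⟨c, hc, rfl⟩, rfl⟩
  show m.m _ = m.m _
  rw [himg, hminv g g.2]

/-- An amenable subgroup carries a relative mean. -/
theorem RelMean.of_amenable {N : Subgroup G} (h : AmenableGroup ↥N) : RelMean N := by
  obtain ⟨m, hminv⟩ := h
  have hpre : (fun b : ↥N => (b : G)) ⁻¹' (N : Set G) = Set.univ := by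
    ext b; simp [b.2]
  refine ⟨⟨fun A => m.m ((fun b : ↥N => (b : G)) ⁻¹' A),
    fun A => m.nonneg _, by simpa using m.total,
    fun A B hd => m.fin_add _ _ (hd.preimage _)⟩, by
      show m.m ((fun b : ↥N => (b : G)) ⁻¹' (N : Set G)) = 1
      rw [hpre, m.total], ?_⟩
  intro n hn A
  have hset : (fun b : ↥N => (b : G)) ⁻¹' ((fun x => n * x) '' A)
      = (fun b : ↥N => (⟨n, hn⟩ : ↥N) * b) '' ((fun b : ↥N => (b : G)) ⁻¹' A) := by
    ext b
    rw [Set.mem_preimage, mem_lmul_image, mem_lmul_image, Set.mem_preimage]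
    have hcoe : (((⟨n, hn⟩ : ↥N)⁻¹ * b : ↥N) : G) = n⁻¹ * (b : G) := rfl
    rw [hcoe]
  show m.m _ = m.m _
  rw [hset, hminv ⟨n, hn⟩ ((fun b : ↥N => (b : G)) ⁻¹' A)]

/-- Amenability transfers along surjective homomorphisms. -/
theorem AmenableGroup.of_surjective {H : Type*} [Group H] (f : G →* H)
    (hf : Function.Surjective f) (h : AmenableGroup G) : AmenableGroup H := by
  obtain ⟨m, hminv⟩ := h
  refine ⟨⟨fun A => m.m (f ⁻¹' A), fun A => m.nonneg _, by simpa using m.total,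
    fun A B hd => m.fin_add _ _ (hd.preimage _)⟩, ?_⟩
  intro h' A
  obtain ⟨g, rfl⟩ := hf h'
  have := hminv g (f ⁻¹' A)
  rw [← this]
  show m.m _ = m.m _
  congr 1
  ext x
  simp only [Set.mem_preimage, mem_lmul_image, map_mul, map_inv]

end GroupHelpers

section Dirac

open Classical in
/-- The Dirac mean at a point. -/
noncomputable def diracMean {X : Type*} (x : X) : Mean X where
  m A := if x ∈ A then 1 else 0
  nonneg A := by by_cases h : x ∈ A <;> simp [h]
  total := by simp
  fin_add A B hd := by
    classical
    by_cases hA : x ∈ A <;> by_cases hB : x ∈ B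
    · exact absurd hB (Set.disjoint_left.1 hd hA)
    · simp [hA, hB]
    · simp [hA, hB]
    · simp [hA, hB]

theorem diracMean_of_mem {X : Type*} {x : X} {A : Set X} (h : x ∈ A) :
    (diracMean x).m A = 1 := by simp [diracMean, h]

theorem diracMean_of_not_mem {X : Type*} {x : X} {A : Set X} (h : x ∉ A) :
    (diracMean x).m A = 0 := by simp [diracMean, h]

end Dirac

section SetLemmas

variable {G : Type*} [Group G]

theorem lmul_image_comp (g h : G) (A : Set G) :
    (fun x => (g * h) * x) '' A = (fun x => g * x) '' ((fun x => h * x) '' A) := by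
  ext x
  rw [mem_lmul_image, mem_lmul_image, mem_lmul_image]
  constructor <;> intro hx <;> [skip; skip] <;>
    · have : h⁻¹ * (g⁻¹ * x) = (g*h)⁻¹ * x := by group
      first
      | rwa [this]
      | rwa [← this]

theorem lmul_image_one (A : Set G) : (fun x : G => 1 * x) '' A = A := by
  ext x; rw [mem_lmul_image]; simp

/-- Invariance under a generating set extends to the generated subgroup. -/
theorem lmul_inv_closure (m : Mean G) (s : Set G)
    (h : ∀ g ∈ s, ∀ A : Set G, m.m ((fun x => g * x) '' A) = m.m A) :
    ∀ g ∈ Subgroup.closure s, ∀ A : Set G, m.m ((fun x => g * x) '' A) = m.m A := by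
  intro g hg
  induction hg using Subgroup.closure_induction with
  | mem g hgs => exact h g hgs
  | one => intro A; rw [lmul_image_one]
  | mul g₁ g₂ _ _ ih1 ih2 =>
    intro A
    rw [lmul_image_comp, ih1, ih2]
  | inv g _ ih =>
    intro A
    have := ih ((fun x => g⁻¹ * x) '' A)
    rw [← lmul_image_comp, mul_inv_cancel, lmul_image_one] at this
    exact this.symm

end SetLemmas

section FolnerZ

open Filter Topology
open scoped Classical

noncomputable def ind01 (A : Set (Multiplicative ℤ)) (x : ℤ) : ℝ :=
  if Multiplicative.ofAdd x ∈ A then 1 else 0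

theorem ind01_nonneg (A : Set (Multiplicative ℤ)) (x : ℤ) : 0 ≤ ind01 A x := by
  unfold ind01; split <;> norm_num

theorem ind01_le_one (A : Set (Multiplicative ℤ)) (x : ℤ) : ind01 A x ≤ 1 := by
  unfold ind01; split <;> norm_num

noncomputable def intCount (n : ℕ) (A : Set (Multiplicative ℤ)) : ℝ :=
  (∑ x ∈ Finset.Ico (0:ℤ) ((n:ℤ)+1), ind01 A x) / ((n:ℝ)+1)

theorem intCount_total (n : ℕ) : intCount n Set.univ = 1 := by
  unfold intCount
  have : ∀ x ∈ Finset.Ico (0:ℤ) ((n:ℤ)+1), ind01 Set.univ x = 1 := by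
    intro x _; simp [ind01]
  rw [Finset.sum_congr rfl this, Finset.sum_const, Int.card_Ico]
  have h2 : (((n:ℤ)+1) - 0).toNat = n + 1 := by omega
  rw [h2, nsmul_eq_mul]
  push_cast
  field_simp

theorem intCount_add (n : ℕ) (A B : Set (Multiplicative ℤ)) (hd : Disjoint A B) :
    intCount n (A ∪ B) = intCount n A + intCount n B := by
  unfold intCount
  have hpt : ∀ x ∈ Finset.Ico (0:ℤ) ((n:ℤ)+1),
      ind01 (A ∪ B) x = ind01 A x + ind01 B x := by
    intro x _
    unfold ind01
    by_cases hA : Multiplicative.ofAdd x ∈ A <;> by_cases hB : Multiplicative.ofAdd x ∈ B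
    · exact absurd hB (Set.disjoint_left.1 hd hA)
    · simp [hA, hB]
    · simp [hA, hB]
    · simp [hA, hB]
  rw [Finset.sum_congr rfl hpt, Finset.sum_add_distrib]
  ring

/-- Uniform means on the Følner intervals `[0, n]` of `ℤ`. -/
noncomputable def intMean (n : ℕ) : Mean (Multiplicative ℤ) where
  m := intCount n
  nonneg A := by
    unfold intCount
    have : 0 ≤ ∑ x ∈ Finset.Ico (0:ℤ) ((n:ℤ)+1), ind01 A x :=
      Finset.sum_nonneg (fun x _ => ind01_nonneg A x)
    positivity
  total := intCount_total n
  fin_add := intCount_add n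

theorem sum_ind_near (A : Set (Multiplicative ℤ)) (s t : Finset ℤ) :
    (∑ x ∈ s, ind01 A x) ≤ (∑ x ∈ t, ind01 A x) + ((s \ t).card : ℝ) := by
  have h1 : (∑ x ∈ s ∩ t, ind01 A x) + (∑ x ∈ s \ t, ind01 A x) = ∑ x ∈ s, ind01 A x :=
    Finset.sum_inter_add_sum_sdiff s t _
  have h2 : (∑ x ∈ s ∩ t, ind01 A x) ≤ ∑ x ∈ t, ind01 A x :=
    Finset.sum_le_sum_of_subset_of_nonneg (Finset.inter_subset_right)
      (fun x _ _ => ind01_nonneg A x)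
  have h3 : (∑ x ∈ s \ t, ind01 A x) ≤ ((s \ t).card : ℝ) := by
    calc (∑ x ∈ s \ t, ind01 A x) ≤ ∑ _x ∈ s \ t, (1:ℝ) :=
          Finset.sum_le_sum (fun x _ => ind01_le_one A x)
      _ = ((s \ t).card : ℝ) := by rw [Finset.sum_const, nsmul_eq_mul, mul_one]
  linarith

theorem intMean_bound (g : ℤ) (A : Set (Multiplicative ℤ)) (n : ℕ) :
    |(intMean n).m ((fun x => Multiplicative.ofAdd g * x) '' A) - (intMean n).m A|
      ≤ 2 * (g.natAbs : ℝ) / ((n:ℝ)+1) := by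
  set N : ℤ := (n:ℤ) + 1 with hN
  have hmem : ∀ x : ℤ, ind01 ((fun y => Multiplicative.ofAdd g * y) '' A) x
      = ind01 A (x - g) := by
    intro x
    unfold ind01
    have hiff : (Multiplicative.ofAdd x ∈ (fun y => Multiplicative.ofAdd g * y) '' A)
        ↔ Multiplicative.ofAdd (x - g) ∈ A := by
      rw [mem_lmul_image]
      have : (Multiplicative.ofAdd g)⁻¹ * Multiplicative.ofAdd x
          = Multiplicative.ofAdd (x - g) := by
        rw [← ofAdd_neg, ← ofAdd_add]
        congr 1
        ring
      rw [this]
    by_cases h : Multiplicative.ofAdd (x - g) ∈ A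
    · rw [if_pos (hiff.2 h), if_pos h]
    · rw [if_neg (fun hc => h (hiff.1 hc)), if_neg h]
  have hshift : (∑ x ∈ Finset.Ico (0:ℤ) N, ind01 A (x - g))
      = ∑ x ∈ Finset.Ico (-g) (N - g), ind01 A x := by
    refine Finset.sum_bij' (fun x _ => x - g) (fun y _ => y + g) ?_ ?_ ?_ ?_ ?_
    · intro x hx
      rw [Finset.mem_Ico] at hx
      show x - g ∈ Finset.Ico (-g) (N - g)
      rw [Finset.mem_Ico]
      omega
    · intro y hy
      rw [Finset.mem_Ico] at hy
      show y + g ∈ Finset.Ico (0:ℤ) N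
      rw [Finset.mem_Ico]
      omega
    · intro x _
      show x - g + g = x
      ring
    · intro y _
      show y + g - g = y
      ring
    · intro x _
      show ind01 A (x - g) = ind01 A (x - g)
      rfl
  have hsd1 : ((Finset.Ico (-g) (N - g) \ Finset.Ico (0:ℤ) N).card : ℝ) ≤ (g.natAbs : ℝ) := by
    have hsub : Finset.Ico (-g) (N - g) \ Finset.Ico (0:ℤ) N
        ⊆ Finset.Ico (-g) 0 ∪ Finset.Ico N (N - g) := by
      intro x hx
      simp only [Finset.mem_sdiff, Finset.mem_Ico, Finset.mem_union] at *
      omega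
    have := le_trans (Finset.card_le_card hsub) (Finset.card_union_le _ _)
    rw [Int.card_Ico, Int.card_Ico] at this
    exact_mod_cast le_trans this (by omega)
  have hsd2 : ((Finset.Ico (0:ℤ) N \ Finset.Ico (-g) (N - g)).card : ℝ) ≤ (g.natAbs : ℝ) := by
    have hsub : Finset.Ico (0:ℤ) N \ Finset.Ico (-g) (N - g)
        ⊆ Finset.Ico (0:ℤ) (-g) ∪ Finset.Ico (N - g) N := by
      intro x hx
      simp only [Finset.mem_sdiff, Finset.mem_Ico, Finset.mem_union] at *
      omega
    have := le_trans (Finset.card_le_card hsub) (Finset.card_union_le _ _)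
    rw [Int.card_Ico, Int.card_Ico] at this
    exact_mod_cast le_trans this (by omega)
  have h1 := sum_ind_near A (Finset.Ico (-g) (N - g)) (Finset.Ico (0:ℤ) N)
  have h2 := sum_ind_near A (Finset.Ico (0:ℤ) N) (Finset.Ico (-g) (N - g))
  have hpos : (0:ℝ) < (n:ℝ) + 1 := by positivity
  show |intCount n _ - intCount n A| ≤ _
  unfold intCount
  rw [Finset.sum_congr rfl (fun x _ => hmem x), hshift, div_sub_div_same, abs_div,
    abs_of_pos hpos]
  have habs : |(∑ x ∈ Finset.Ico (-g) (N - g), ind01 A x)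
      - ∑ x ∈ Finset.Ico (0:ℤ) N, ind01 A x| ≤ 2 * (g.natAbs : ℝ) := by
    rw [abs_sub_le_iff]
    constructor
    · have hna : (0:ℝ) ≤ (g.natAbs : ℝ) := Nat.cast_nonneg _
      linarith
    · have hna : (0:ℝ) ≤ (g.natAbs : ℝ) := Nat.cast_nonneg _
      linarith
  gcongr

theorem amenable_mult_int : AmenableGroup (Multiplicative ℤ) := by
  set u := Ultrafilter.of (Filter.atTop : Filter ℕ) with hu
  refine ⟨limitMean u intMean, ?_⟩
  intro g A
  refine limitMean_eq_of_tendsto_zero u Filter.atTop (Ultrafilter.of_le _) intMean _ _ ?_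
  have hb : ∀ n : ℕ, |(intMean n).m ((fun x => g * x) '' A) - (intMean n).m A|
      ≤ 2 * ((g.toAdd).natAbs : ℝ) / ((n:ℝ)+1) := by
    intro n
    have := intMean_bound g.toAdd A n
    simpa using this
  refine squeeze_zero_norm hb ?_
  have hcomp := (tendsto_const_div_atTop_nhds_zero_nat
    (2 * ((g.toAdd).natAbs : ℝ))).comp (Filter.tendsto_add_atTop_nat 1)
  convert hcomp using 2 with n
  simp only [Function.comp_apply]
  push_cast
  ring

end FolnerZ

section RelMeanConstructions

variable {G : Type*} [Group G]

theorem relMean_bot : RelMean (⊥ : Subgroup G) := by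
  refine ⟨diracMean 1, ?_, ?_⟩
  · exact diracMean_of_mem (by simp)
  · intro n hn A
    rw [Subgroup.mem_bot] at hn
    subst hn
    rw [lmul_image_one]

theorem relMean_zpowers (a : G) : RelMean (Subgroup.zpowers a) := by
  obtain ⟨mz, hz⟩ := amenable_mult_int
  set φ : Multiplicative ℤ → G := fun k => a ^ (k.toAdd) with hφ
  refine ⟨⟨fun A => mz.m (φ ⁻¹' A), fun A => mz.nonneg _, by simpa using mz.total,
    fun A B hd => mz.fin_add _ _ (hd.preimage _)⟩, ?_, ?_⟩
  · show mz.m (φ ⁻¹' (Subgroup.zpowers a : Set G)) = 1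
    have hpre : φ ⁻¹' (Subgroup.zpowers a : Set G) = Set.univ := by
      ext k
      simp only [Set.mem_preimage, Set.mem_univ, iff_true, SetLike.mem_coe]
      exact Subgroup.mem_zpowers_iff.2 ⟨k.toAdd, rfl⟩
    rw [hpre, mz.total]
  · intro n hn A
    obtain ⟨j, hj⟩ := Subgroup.mem_zpowers_iff.1 hn
    show mz.m (φ ⁻¹' ((fun x => n * x) '' A)) = mz.m (φ ⁻¹' A)
    have hset : φ ⁻¹' ((fun x => n * x) '' A)
        = (fun k => Multiplicative.ofAdd j * k) '' (φ ⁻¹' A) := by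
      ext k
      rw [Set.mem_preimage, mem_lmul_image, mem_lmul_image, Set.mem_preimage]
      have h1 : n⁻¹ * φ k = φ ((Multiplicative.ofAdd j)⁻¹ * k) := by
        rw [hφ]
        simp only [toAdd_mul, toAdd_inv, toAdd_ofAdd]
        rw [zpow_add, zpow_neg, hj]
      rw [h1]
    rw [hset, hz (Multiplicative.ofAdd j) (φ ⁻¹' A)]

theorem relMean_sup_comm {H K : Subgroup G} (hH : RelMean H) (hK : RelMean K)
    (hcomm : ∀ h ∈ H, ∀ k ∈ K, h * k = k * h) : RelMean (H ⊔ K) := by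
  obtain ⟨m1, hm1, hinv1⟩ := hH
  obtain ⟨m2, hm2, hinv2⟩ := hK
  set F : Set G → G → ℝ := fun A x => m2.m ((fun y => x * y) ⁻¹' A) with hF
  have h0 : ∀ (A : Set G) (x : G), 0 ≤ F A x := fun A x => m2.nonneg _
  have h1 : ∀ (A : Set G) (x : G), F A x ≤ 1 := fun A x => m2.le_one _
  have huniv : ∀ x : G, F Set.univ x = 1 := fun x => by
    show m2.m ((fun y => x * y) ⁻¹' Set.univ) = 1
    simpa using m2.total
  have hadd : ∀ A B : Set G, Disjoint A B → ∀ x, F (A ∪ B) x = F A x + F B x := by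
    intro A B hd x
    show m2.m ((fun y => x * y) ⁻¹' (A ∪ B)) = _
    rw [Set.preimage_union]
    exact m2.fin_add _ _ (hd.preimage _)
  set m := mkMean m1 F h0 h1 huniv hadd with hm
  have hmA : ∀ A, m.m A = integ m1 (F A) := fun A => rfl
  have hgen : ∀ g ∈ ((H : Set G) ∪ (K : Set G)), ∀ A : Set G,
      m.m ((fun x => g * x) '' A) = m.m A := by
    rintro g (hg | hg) A
    · -- g ∈ H : use invariance of m1
      have hgH : g ∈ H := hg
      rw [hmA, hmA]
      refine integ_congr_layers m1 (fun t => ?_)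
      have hF2 : ∀ x, F ((fun y => g * y) '' A) x = F A (g⁻¹ * x) := by
        intro x
        show m2.m _ = m2.m _
        congr 1
        ext y
        rw [Set.mem_preimage, mem_lmul_image, Set.mem_preimage]
        have hxy : g⁻¹ * (x * y) = (g⁻¹ * x) * y := by group
        rw [hxy]
      have hlay : {x | t ≤ F ((fun y => g * y) '' A) x}
          = (fun x => g * x) '' {x | t ≤ F A x} := by
        ext x
        rw [Set.mem_setOf_eq, mem_lmul_image, Set.mem_setOf_eq, hF2]
      rw [hlay, hinv1 g hgH]
    · -- g ∈ K : F is a.e. unchanged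
      have hgK : g ∈ K := hg
      rw [hmA, hmA]
      refine integ_congr_ae m1 hm1 (fun x hx => ?_)
      have hxH : x ∈ H := hx
      show m2.m _ = m2.m _
      have hset : (fun y => x * y) ⁻¹' ((fun y => g * y) '' A)
          = (fun y => g * y) '' ((fun y => x * y) ⁻¹' A) := by
        ext y
        rw [Set.mem_preimage, mem_lmul_image, mem_lmul_image, Set.mem_preimage]
        have hc : x * g⁻¹ = g⁻¹ * x := hcomm x hxH g⁻¹ (inv_mem hgK)
        have hxy : g⁻¹ * (x * y) = x * (g⁻¹ * y) := by
          calc g⁻¹ * (x * y) = (g⁻¹ * x) * y := by group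
            _ = (x * g⁻¹) * y := by rw [hc]
            _ = x * (g⁻¹ * y) := by group
        rw [hxy]
      rw [hset, hinv2 g hgK]
  refine ⟨m, ?_, ?_⟩
  · rw [hmA]
    refine integ_eq_one m1 (fun x => h0 _ x) hm1 ?_
    intro x hx
    have hxH : x ∈ H := hx
    have hsub : (K : Set G) ⊆ (fun y => x * y) ⁻¹' ((H ⊔ K : Subgroup G) : Set G) := by
      intro k hk
      show x * k ∈ (H ⊔ K : Subgroup G)
      exact mul_mem ((le_sup_left : H ≤ H ⊔ K) hxH) ((le_sup_right : K ≤ H ⊔ K) hk)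
    exact (m2.of_subset_one hm2 hsub).ge
  · intro n hn A
    refine lmul_inv_closure m ((H : Set G) ∪ (K : Set G)) hgen n ?_ A
    rw [← Subgroup.sup_eq_closure]
    exact hn

theorem comm_amenable' (A : Type*) [Group A] (hcomm : ∀ a b : A, a * b = b * a) :
    AmenableGroup A := by
  classical
  have hfg : ∀ F : Finset A, RelMean (Subgroup.closure (F : Set A)) := by
    intro F
    induction F using Finset.induction_on with
    | empty => simpa [Subgroup.closure_empty] using relMean_bot (G := A)
    | insert a F hna ih =>
      have hclos : Subgroup.closure ((insert a F : Finset A) : Set A)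
          = Subgroup.zpowers a ⊔ Subgroup.closure (F : Set A) := by
        rw [Finset.coe_insert, Set.insert_eq, Subgroup.closure_union,
          ← Subgroup.zpowers_eq_closure]
      rw [hclos]
      exact relMean_sup_comm (relMean_zpowers a) ih (fun h _ k _ => hcomm h k)
  set u := Ultrafilter.of (Filter.atTop : Filter (Finset A)) with hu
  set ms : Finset A → Mean A := fun F => (hfg F).choose with hms
  refine ⟨limitMean u ms, ?_⟩
  intro g B
  refine limitMean_congr u ms ?_
  have hev : ∀ᶠ F in (Filter.atTop : Filter (Finset A)),
      (ms F).m ((fun x => g * x) '' B) = (ms F).m B := by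
    filter_upwards [Filter.eventually_ge_atTop ({g} : Finset A)] with F hF
    have hgF : g ∈ Subgroup.closure (F : Set A) :=
      Subgroup.subset_closure (Finset.singleton_subset_iff.1 hF)
    exact (hfg F).choose_spec.2 g hgF B
  exact hev.filter_mono (Ultrafilter.of_le _)

/-- Every subgroup of an amenable group carries a relative mean. -/
theorem relMean_of_amenable_ambient {Q : Type*} [Group Q] (hQ : AmenableGroup Q)
    (H : Subgroup Q) : RelMean H := by
  obtain ⟨μ, hμ⟩ := hQ
  set t : Q → Q := fun g => (Quotient.mk (QuotientGroup.rightRel H) g).out with ht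
  have htmem : ∀ g : Q, g * (t g)⁻¹ ∈ H := by
    intro g
    have heq : (Quotient.mk (QuotientGroup.rightRel H) ((Quotient.mk
        (QuotientGroup.rightRel H) g).out)) = Quotient.mk (QuotientGroup.rightRel H) g :=
      Quotient.out_eq _
    have hrel := Quotient.exact heq
    exact (QuotientGroup.rightRel_apply).1 hrel
  have hteq : ∀ h ∈ H, ∀ g, t (h * g) = t g := by
    intro h hh g
    have : Quotient.mk (QuotientGroup.rightRel H) (h * g)
        = Quotient.mk (QuotientGroup.rightRel H) g := by
      apply Quotient.sound
      show (QuotientGroup.rightRel H) (h * g) g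
      rw [QuotientGroup.rightRel_apply]
      have : g * (h * g)⁻¹ = h⁻¹ := by group
      rw [this]
      exact inv_mem hh
    rw [ht]
    show (Quotient.mk (QuotientGroup.rightRel H) (h * g)).out = _
    rw [this]
  set r : Q → Q := fun g => g * (t g)⁻¹ with hr
  have hrH : ∀ g, r g ∈ H := htmem
  have hrequi : ∀ h ∈ H, ∀ g, r (h * g) = h * r g := by
    intro h hh g
    show (h * g) * (t (h * g))⁻¹ = h * (g * (t g)⁻¹)
    rw [hteq h hh g]
    group
  refine ⟨⟨fun A => μ.m (r ⁻¹' A), fun A => μ.nonneg _, by simpa using μ.total,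
    fun A B hd => μ.fin_add _ _ (hd.preimage _)⟩, ?_, ?_⟩
  · show μ.m (r ⁻¹' (H : Set Q)) = 1
    have : r ⁻¹' (H : Set Q) = Set.univ := Set.eq_univ_iff_forall.2 (fun g => hrH g)
    rw [this, μ.total]
  · intro h hh A
    show μ.m (r ⁻¹' ((fun x => h * x) '' A)) = μ.m (r ⁻¹' A)
    have hset : r ⁻¹' ((fun x => h * x) '' A) = (fun x => h * x) '' (r ⁻¹' A) := by
      ext x
      rw [Set.mem_preimage, mem_lmul_image, mem_lmul_image, Set.mem_preimage]
      rw [hrequi h⁻¹ (inv_mem hh) x]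
    rw [hset, hμ h (r ⁻¹' A)]

end RelMeanConstructions

section SDA

variable {G : Type*} [Group G]

theorem sda_relMean {N : Subgroup G} (h : SemidirectAmenable N) : RelMean N := by
  obtain ⟨m, h1, h2, _⟩ := h
  exact ⟨m, h1, h2⟩

theorem sda_bot : SemidirectAmenable (⊥ : Subgroup G) := by
  refine ⟨diracMean 1, diracMean_of_mem (by simp), ?_, ?_⟩
  · intro n hn A
    rw [Subgroup.mem_bot] at hn
    subst hn
    rw [lmul_image_one]
  · intro g A
    by_cases h1 : (1:G) ∈ A
    · rw [diracMean_of_mem h1, diracMean_of_mem ((mem_conj_image g 1 A).2 (by simpa using h1))]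
    · rw [diracMean_of_not_mem h1, diracMean_of_not_mem
        (fun hc => h1 (by simpa using (mem_conj_image g 1 A).1 hc))]

/-- The product of two normal semidirectly amenable subgroups is semidirectly amenable. -/
theorem sda_sup {H K : Subgroup G} (hKn : K.Normal)
    (hH : SemidirectAmenable H) (hK : SemidirectAmenable K) :
    SemidirectAmenable (H ⊔ K) := by
  obtain ⟨m1, hm1, hinv1, hconj1⟩ := hH
  obtain ⟨m2, hm2, hinv2, hconj2⟩ := hK
  set F : Set G → G → ℝ := fun A x => m2.m ((fun y => x * y) ⁻¹' A) with hF
  have h0 : ∀ (A : Set G) (x : G), 0 ≤ F A x := fun A x => m2.nonneg _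
  have h1 : ∀ (A : Set G) (x : G), F A x ≤ 1 := fun A x => m2.le_one _
  have huniv : ∀ x : G, F Set.univ x = 1 := fun x => by
    show m2.m ((fun y => x * y) ⁻¹' Set.univ) = 1
    simpa using m2.total
  have hadd : ∀ A B : Set G, Disjoint A B → ∀ x, F (A ∪ B) x = F A x + F B x := by
    intro A B hd x
    show m2.m ((fun y => x * y) ⁻¹' (A ∪ B)) = _
    rw [Set.preimage_union]
    exact m2.fin_add _ _ (hd.preimage _)
  set m := mkMean m1 F h0 h1 huniv hadd with hm
  have hmA : ∀ A, m.m A = integ m1 (F A) := fun A => rfl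
  have hgen : ∀ g ∈ ((H : Set G) ∪ (K : Set G)), ∀ A : Set G,
      m.m ((fun x => g * x) '' A) = m.m A := by
    rintro g (hg | hg) A
    · -- g ∈ H : use translation invariance of m1
      have hgH : g ∈ H := hg
      rw [hmA, hmA]
      refine integ_congr_layers m1 (fun t => ?_)
      have hF2 : ∀ x, F ((fun y => g * y) '' A) x = F A (g⁻¹ * x) := by
        intro x
        show m2.m _ = m2.m _
        congr 1
        ext y
        rw [Set.mem_preimage, mem_lmul_image, Set.mem_preimage]
        have hxy : g⁻¹ * (x * y) = (g⁻¹ * x) * y := by group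
        rw [hxy]
      have hlay : {x | t ≤ F ((fun y => g * y) '' A) x}
          = (fun x => g * x) '' {x | t ≤ F A x} := by
        ext x
        rw [Set.mem_setOf_eq, mem_lmul_image, Set.mem_setOf_eq, hF2]
      rw [hlay, hinv1 g hgH]
    · -- g ∈ K : use normality of K and translation invariance of m2
      have hgK : g ∈ K := hg
      rw [hmA, hmA]
      refine integ_congr_layers m1 (fun t => ?_)
      have hF2 : ∀ x, F ((fun y => g * y) '' A) x = F A x := by
        intro x
        show m2.m _ = m2.m _
        set k' : G := x⁻¹ * g⁻¹ * x with hk'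
        have hk'K : k' ∈ K := by
          have : x⁻¹ * g⁻¹ * x = x⁻¹ * g⁻¹ * (x⁻¹)⁻¹ := by group
          rw [hk', this]
          exact hKn.conj_mem g⁻¹ (inv_mem hgK) x⁻¹
        have hset : (fun y => x * y) ⁻¹' ((fun y => g * y) '' A)
            = (fun y => k'⁻¹ * y) '' ((fun y => x * y) ⁻¹' A) := by
          ext y
          rw [Set.mem_preimage, mem_lmul_image, mem_lmul_image, Set.mem_preimage]
          have hxy : g⁻¹ * (x * y) = x * (k' * y) := by rw [hk']; group
          rw [hxy, inv_inv]
        rw [hset, hinv2 k'⁻¹ (inv_mem hk'K)]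
      exact congrArg m1.m (by ext x; rw [Set.mem_setOf_eq, Set.mem_setOf_eq, hF2])
  refine ⟨m, ?_, ?_, ?_⟩
  · rw [hmA]
    refine integ_eq_one m1 (fun x => h0 _ x) hm1 ?_
    intro x hx
    have hxH : x ∈ H := hx
    have hsub : (K : Set G) ⊆ (fun y => x * y) ⁻¹' ((H ⊔ K : Subgroup G) : Set G) := by
      intro k hk
      show x * k ∈ (H ⊔ K : Subgroup G)
      exact mul_mem ((le_sup_left : H ≤ H ⊔ K) hxH) ((le_sup_right : K ≤ H ⊔ K) hk)
    exact (m2.of_subset_one hm2 hsub).ge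
  · intro n hn A
    refine lmul_inv_closure m ((H : Set G) ∪ (K : Set G)) hgen n ?_ A
    rw [← Subgroup.sup_eq_closure]
    exact hn
  · -- conjugation invariance
    intro g A
    rw [hmA, hmA]
    refine integ_congr_layers m1 (fun t => ?_)
    have hF2 : ∀ x, F ((fun y => g * y * g⁻¹) '' A) x = F A (g⁻¹ * x * g) := by
      intro x
      show m2.m _ = m2.m _
      have hset : (fun y => x * y) ⁻¹' ((fun y => g * y * g⁻¹) '' A)
          = (fun y => g * y * g⁻¹) '' ((fun y => (g⁻¹ * x * g) * y) ⁻¹' A) := by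
        ext y
        rw [Set.mem_preimage, mem_conj_image, mem_conj_image, Set.mem_preimage]
        have hxy : g⁻¹ * (x * y) * g = (g⁻¹ * x * g) * (g⁻¹ * y * g) := by group
        rw [hxy]
      rw [hset, hconj2 g _]
    have hlay : {x | t ≤ F ((fun y => g * y * g⁻¹) '' A) x}
        = (fun x => g * x * g⁻¹) '' {x | t ≤ F A x} := by
      ext x
      rw [Set.mem_setOf_eq, mem_conj_image, Set.mem_setOf_eq, hF2]
    rw [hlay, hconj1 g]

/-- Directed suprema of semidirectly amenable subgroups are semidirectly amenable. -/
theorem sda_iSup {ι : Type*} [Nonempty ι] {N : ι → Subgroup G}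
    (hdir : Directed (· ≤ ·) N) (h : ∀ i, SemidirectAmenable (N i)) :
    SemidirectAmenable (⨆ i, N i) := by
  classical
  set T : ι → Set ι := fun i => {j | N i ≤ N j} with hT
  have hTdir : Directed (· ≥ ·) (fun i => Filter.principal (T i)) := by
    intro i j
    obtain ⟨k, hik, hjk⟩ := hdir i j
    refine ⟨k, ?_, ?_⟩ <;>
      · show Filter.principal (T k) ≤ Filter.principal (T _)
        rw [Filter.le_principal_iff, Filter.mem_principal]
        intro l hl
        first
        | exact le_trans hik hl
        | exact le_trans hjk hl
  have hne : ∀ i, (Filter.principal (T i)).NeBot := by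
    intro i
    rw [Filter.principal_neBot_iff]
    exact ⟨i, le_refl (N i)⟩
  have hinfne : (⨅ i, Filter.principal (T i)).NeBot :=
    Filter.iInf_neBot_of_directed hTdir hne
  set u := Ultrafilter.of (⨅ i, Filter.principal (T i)) with hu
  have hmemT : ∀ i, T i ∈ u := by
    intro i
    exact (Ultrafilter.of_le _) (Filter.mem_iInf_of_mem i (Filter.mem_principal_self _))
  set ms : ι → Mean G := fun i => (h i).choose with hms
  have hspec : ∀ i, (ms i).m (N i : Set G) = 1 ∧
      (∀ n ∈ N i, ∀ A : Set G, (ms i).m ((fun x => n * x) '' A) = (ms i).m A) ∧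
      (∀ (g : G) (A : Set G), (ms i).m ((fun x => g * x * g⁻¹) '' A) = (ms i).m A) :=
    fun i => (h i).choose_spec
  refine ⟨limitMean u ms, ?_, ?_, ?_⟩
  · refine limitMean_eq_one u ms (Filter.Eventually.of_forall (fun i => ?_))
    exact (ms i).of_subset_one (hspec i).1
      (SetLike.coe_subset_coe.2 (le_iSup N i))
  · intro n hn A
    obtain ⟨i₀, hi₀⟩ := (Subgroup.mem_iSup_of_directed hdir).1 hn
    refine limitMean_congr u ms ?_
    filter_upwards [hmemT i₀] with j hj
    exact (hspec j).2.1 n (hj hi₀) A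
  · intro g A
    refine limitMean_congr u ms (Filter.Eventually.of_forall (fun i => ?_))
    exact (hspec i).2.2 g A

end SDA

section Key

theorem integ_congr_fun {Q : Type*} (m : Mean Q) {f g : Q → ℝ} (h : ∀ q, f q = g q) :
    integ m f = integ m g :=
  integ_congr_layers m (fun t => by
    congr 1
    ext q
    simp only [Set.mem_setOf_eq, h q])

variable {G : Type*} [Group G]

theorem centralizer_normal {N : Subgroup G} (hN : N.Normal) :
    (Subgroup.centralizer (N : Set G)).Normal := by
  constructor
  intro c hc g
  rw [Subgroup.mem_centralizer_iff] at hc ⊢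
  intro h hh
  have hh' : g⁻¹ * h * g ∈ N := by
    have := hN.conj_mem h hh g⁻¹
    simpa using this
  have hcomm := hc _ hh'
  calc h * (g * c * g⁻¹) = g * ((g⁻¹ * h * g) * c) * g⁻¹ := by group
    _ = g * (c * (g⁻¹ * h * g)) * g⁻¹ := by rw [hcomm]
    _ = (g * c * g⁻¹) * h := by group

/-- `N ⊓ C_G(N)` is commutative. -/
noncomputable def infCentralizerCommGroup (N : Subgroup G) :
    CommGroup ↥(N ⊓ Subgroup.centralizer (N : Set G)) :=
  { (inferInstance : Group ↥(N ⊓ Subgroup.centralizer (N : Set G))) with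
    mul_comm := by
      intro a b
      have haN : (a : G) ∈ N := a.2.1
      have hbC : (b : G) ∈ Subgroup.centralizer (N : Set G) := b.2.2
      have := (Subgroup.mem_centralizer_iff.1 hbC) (a : G) haN
      exact Subtype.ext this }

/-- The key lemma: a normal subgroup with amenable `G/C_G(N)` is semidirectly amenable. -/
theorem sda_of_centralizer_quotient_amenable {N : Subgroup G} (hN : N.Normal)
    (hQ : AmenableQuotientBy (Subgroup.centralizer (N : Set G))) :
    SemidirectAmenable N := by
  classical
  haveI instC : (Subgroup.centralizer (N : Set G)).Normal := centralizer_normal hN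
  set C := Subgroup.centralizer (N : Set G) with hC
  have hQam : AmenableGroup (G ⧸ C) := hQ
  set Z := N ⊓ C with hZ
  have hZam : AmenableGroup ↥Z := comm_amenable' ↥Z (fun a b => by
    have haN : (a : G) ∈ N := a.2.1
    have hbC : (b : G) ∈ Subgroup.centralizer (N : Set G) := b.2.2
    exact Subtype.ext ((Subgroup.mem_centralizer_iff.1 hbC) (a : G) haN))
  obtain ⟨ζ, hζ1, hζinv⟩ := RelMean.of_amenable hZam
  set π : G →* G ⧸ C := QuotientGroup.mk' C with hπ
  set Np : Subgroup (G ⧸ C) := N.map π with hNp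
  obtain ⟨μ', hμ'1, hμ'inv⟩ := relMean_of_amenable_ambient hQam Np
  set s : G ⧸ C → G := fun q => if h : ∃ n, n ∈ N ∧ π n = q then h.choose else 1 with hs
  have hsmem : ∀ q : G ⧸ C, q ∈ Np → s q ∈ N ∧ π (s q) = q := by
    intro q hq
    rw [hNp, Subgroup.mem_map] at hq
    obtain ⟨n, hn, hn2⟩ := hq
    have hex : ∃ n, n ∈ N ∧ π n = q := ⟨n, hn, hn2⟩
    rw [hs]
    show (if h : ∃ n, n ∈ N ∧ π n = q then h.choose else 1) ∈ N
      ∧ π (if h : ∃ n, n ∈ N ∧ π n = q then h.choose else 1) = q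
    rw [dif_pos hex]
    exact ⟨hex.choose_spec.1, hex.choose_spec.2⟩
  have hNpmem : ∀ n ∈ N, π n ∈ Np := fun n hn => Subgroup.mem_map.2 ⟨n, hn, rfl⟩
  -- Step A: relative mean on N
  set F1 : Set G → (G ⧸ C) → ℝ := fun A q => ζ.m ((fun y => s q * y) ⁻¹' A) with hF1
  have h10 : ∀ (A : Set G) q, 0 ≤ F1 A q := fun A q => ζ.nonneg _
  have h11 : ∀ (A : Set G) q, F1 A q ≤ 1 := fun A q => ζ.le_one _
  have h1univ : ∀ q, F1 Set.univ q = 1 := fun q => by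
    show ζ.m ((fun y => s q * y) ⁻¹' Set.univ) = 1
    simpa using ζ.total
  have h1add : ∀ A B : Set G, Disjoint A B → ∀ q, F1 (A ∪ B) q = F1 A q + F1 B q := by
    intro A B hd q
    show ζ.m ((fun y => s q * y) ⁻¹' (A ∪ B)) = _
    rw [Set.preimage_union]
    exact ζ.fin_add _ _ (hd.preimage _)
  set ν0 := mkMean μ' F1 h10 h11 h1univ h1add with hν0def
  have hν0A : ∀ A, ν0.m A = integ μ' (F1 A) := fun A => rfl
  have hν0 : RelMean N := by
    refine ⟨ν0, ?_, ?_⟩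
    · rw [hν0A]
      refine integ_eq_one μ' (fun q => h10 _ q) hμ'1 ?_
      intro q hq
      obtain ⟨hsN, -⟩ := hsmem q hq
      have hsub : (Z : Set G) ⊆ (fun y => s q * y) ⁻¹' (N : Set G) := by
        intro z hz
        show s q * z ∈ N
        exact mul_mem hsN (Subgroup.mem_inf.1 hz).1
      exact (ζ.of_subset_one hζ1 hsub).ge
    · intro n₀ hn₀ A
      rw [hν0A, hν0A]
      have hstep : ∀ q ∈ (Np : Set (G ⧸ C)), F1 ((fun x => n₀ * x) '' A) q
          = (fun q' => F1 A ((π n₀)⁻¹ * q')) q := by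
        intro q hq
        have hqNp : q ∈ Np := hq
        have hq' : (π n₀)⁻¹ * q ∈ Np := mul_mem (inv_mem (hNpmem n₀ hn₀)) hqNp
        obtain ⟨hsqN, hsq⟩ := hsmem q hqNp
        obtain ⟨hsq'N, hsq'⟩ := hsmem _ hq'
        set z₀ : G := (s ((π n₀)⁻¹ * q))⁻¹ * n₀⁻¹ * s q with hz₀
        have hz₀N : z₀ ∈ N := mul_mem (mul_mem (inv_mem hsq'N) (inv_mem hn₀)) hsqN
        have hz₀C : z₀ ∈ C := by
          have hπz : π z₀ = 1 := by
            rw [hz₀, map_mul, map_mul, map_inv, map_inv, hsq, hsq']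
            group
          have := (QuotientGroup.eq_one_iff z₀).1 hπz
          exact this
        have hz₀Z : z₀ ∈ Z := Subgroup.mem_inf.2 ⟨hz₀N, hz₀C⟩
        show ζ.m _ = ζ.m _
        have hset : (fun y => s q * y) ⁻¹' ((fun x => n₀ * x) '' A)
            = (fun y => z₀⁻¹ * y) '' ((fun y => s ((π n₀)⁻¹ * q) * y) ⁻¹' A) := by
          ext y
          rw [Set.mem_preimage, mem_lmul_image, mem_lmul_image, Set.mem_preimage, inv_inv]
          have hxy : n₀⁻¹ * (s q * y) = s ((π n₀)⁻¹ * q) * (z₀ * y) := by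
            rw [hz₀]; group
          rw [hxy]
        rw [hset, hζinv z₀⁻¹ (inv_mem hz₀Z) _]
      rw [integ_congr_ae μ' hμ'1 hstep]
      refine integ_congr_layers μ' (fun t => ?_)
      have hlay : {q | t ≤ F1 A ((π n₀)⁻¹ * q)} = (fun q => π n₀ * q) '' {q | t ≤ F1 A q} := by
        ext q
        rw [Set.mem_setOf_eq, mem_lmul_image, Set.mem_setOf_eq]
      rw [show {q | t ≤ (fun q' => F1 A ((π n₀)⁻¹ * q')) q} = {q | t ≤ F1 A ((π n₀)⁻¹ * q)}
          from rfl,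
        hlay, hμ'inv (π n₀) (hNpmem n₀ hn₀) _]
  -- Step B: semidirect amenability
  obtain ⟨ν, hν1, hνinv⟩ := hν0
  have hνconc : ∀ X : Set G, ν.m X = ν.m (X ∩ N) := fun X => (ν.inter_of_one hν1 X).symm
  obtain ⟨μ, hμinv⟩ := hQam
  set so : G ⧸ C → G := fun q => q.out with hso
  have hsoeq : ∀ q : G ⧸ C, π (so q) = q := fun q => Quotient.out_eq q
  set F2 : Set G → (G ⧸ C) → ℝ := fun A q => ν.m {y | so q * y * (so q)⁻¹ ∈ A} with hF2
  have h20 : ∀ (A : Set G) q, 0 ≤ F2 A q := fun A q => ν.nonneg _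
  have h21 : ∀ (A : Set G) q, F2 A q ≤ 1 := fun A q => ν.le_one _
  have h2univ : ∀ q, F2 Set.univ q = 1 := fun q => by
    show ν.m {y | so q * y * (so q)⁻¹ ∈ Set.univ} = 1
    have : {y : G | so q * y * (so q)⁻¹ ∈ Set.univ} = Set.univ := by
      ext y; simp
    rw [this, ν.total]
  have h2add : ∀ A B : Set G, Disjoint A B → ∀ q, F2 (A ∪ B) q = F2 A q + F2 B q := by
    intro A B hd q
    show ν.m {y | so q * y * (so q)⁻¹ ∈ A ∪ B} = _
    have hsp : {y : G | so q * y * (so q)⁻¹ ∈ A ∪ B}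
        = {y | so q * y * (so q)⁻¹ ∈ A} ∪ {y | so q * y * (so q)⁻¹ ∈ B} := by
      ext y; simp [Set.mem_union]
    have hdj : Disjoint {y : G | so q * y * (so q)⁻¹ ∈ A} {y | so q * y * (so q)⁻¹ ∈ B} := by
      rw [Set.disjoint_left]
      intro y hy1 hy2
      exact absurd hy2 (fun h2 => Set.disjoint_left.1 hd hy1 h2)
    rw [hsp, ν.fin_add _ _ hdj]
  set m := mkMean μ F2 h20 h21 h2univ h2add with hmdef
  have hmA : ∀ A, m.m A = integ μ (F2 A) := fun A => rfl
  refine ⟨m, ?_, ?_, ?_⟩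
  · -- m (N) = 1
    rw [hmA]
    refine integ_eq_one μ (fun q => h20 _ q) μ.total ?_
    intro q _
    show (1:ℝ) ≤ ν.m {y | so q * y * (so q)⁻¹ ∈ (N : Set G)}
    have : {y : G | so q * y * (so q)⁻¹ ∈ (N : Set G)} = (N : Set G) := by
      ext y
      simp only [Set.mem_setOf_eq, SetLike.mem_coe]
      constructor
      · intro hy
        have h2 := hN.conj_mem _ hy (so q)⁻¹
        have h3 : (so q)⁻¹ * (so q * y * (so q)⁻¹) * ((so q)⁻¹)⁻¹ = y := by group
        rwa [h3] at h2
      · intro hy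
        exact hN.conj_mem y hy (so q)
    rw [this, hν1]
  · -- translation invariance for n ∈ N
    intro n hn A
    rw [hmA, hmA]
    refine integ_congr_fun μ (fun q => ?_)
    show ν.m _ = ν.m _
    set c : G := so q with hc
    set n' : G := c⁻¹ * n⁻¹ * c with hn'
    have hn'N : n' ∈ N := by
      have : c⁻¹ * n⁻¹ * c = c⁻¹ * n⁻¹ * (c⁻¹)⁻¹ := by group
      rw [hn', this]
      exact hN.conj_mem n⁻¹ (inv_mem hn) c⁻¹
    have hset : {y : G | c * y * c⁻¹ ∈ (fun x => n * x) '' A}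
        = (fun y => n'⁻¹ * y) '' {y | c * y * c⁻¹ ∈ A} := by
      ext y
      rw [Set.mem_setOf_eq, mem_lmul_image, mem_lmul_image, Set.mem_setOf_eq, inv_inv]
      have hxy : n⁻¹ * (c * y * c⁻¹) = c * (n' * y) * c⁻¹ := by rw [hn']; group
      rw [hxy]
    rw [hset, hνinv n'⁻¹ (inv_mem hn'N) _]
  · -- conjugation invariance
    intro g A
    rw [hmA, hmA]
    have hstep : ∀ q, F2 ((fun x => g * x * g⁻¹) '' A) q = F2 A ((π g)⁻¹ * q) := by
      intro q
      set c : G := so q with hc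
      set c' : G := so ((π g)⁻¹ * q) with hc'
      set d : G := c'⁻¹ * (g⁻¹ * c) with hd
      have hdC : d ∈ C := by
        have hπd : π d = 1 := by
          rw [hd, map_mul, map_mul, map_inv, map_inv]
          rw [show π c = q from hsoeq q, show π c' = (π g)⁻¹ * q from hsoeq _]
          group
        exact (QuotientGroup.eq_one_iff d).1 hπd
      show ν.m _ = ν.m _
      rw [hνconc {y | c * y * c⁻¹ ∈ (fun x => g * x * g⁻¹) '' A},
        hνconc {y | c' * y * c'⁻¹ ∈ A}]
      congr 1
      ext y
      simp only [Set.mem_inter_iff, Set.mem_setOf_eq, SetLike.mem_coe]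
      constructor
      · rintro ⟨hy1, hy2⟩
        refine ⟨?_, hy2⟩
        rw [mem_conj_image] at hy1
        -- g⁻¹ * (c * y * c⁻¹) * g ∈ A ; rewrite as c' * (d y d⁻¹) * c'⁻¹ = c' * y * c'⁻¹
        have hdy : d * y * d⁻¹ = y := by
          have := (Subgroup.mem_centralizer_iff.1 hdC) y (by exact hy2)
          -- y * d = d * y
          calc d * y * d⁻¹ = d * y * d⁻¹ := rfl
            _ = y := by rw [← this]; group
        have hkey : g⁻¹ * (c * y * c⁻¹) * g = c' * (d * y * d⁻¹) * c'⁻¹ := by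
          rw [hd]; group
        rw [hkey, hdy] at hy1
        exact hy1
      · rintro ⟨hy1, hy2⟩
        refine ⟨?_, hy2⟩
        rw [mem_conj_image]
        have hdy : d * y * d⁻¹ = y := by
          have := (Subgroup.mem_centralizer_iff.1 hdC) y (by exact hy2)
          calc d * y * d⁻¹ = d * y * d⁻¹ := rfl
            _ = y := by rw [← this]; group
        have hkey : g⁻¹ * (c * y * c⁻¹) * g = c' * (d * y * d⁻¹) * c'⁻¹ := by
          rw [hd]; group
        rw [hkey, hdy]
        exact hy1
    rw [integ_congr_fun μ hstep]
    refine integ_congr_layers μ (fun t => ?_)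
    have hlay : {q | t ≤ F2 A ((π g)⁻¹ * q)} = (fun q => π g * q) '' {q | t ≤ F2 A q} := by
      ext q
      rw [Set.mem_setOf_eq, mem_lmul_image, Set.mem_setOf_eq]
    rw [show {q | t ≤ (fun q' => F2 A ((π g)⁻¹ * q')) q} = {q | t ≤ F2 A ((π g)⁻¹ * q)} from rfl,
      hlay, hμinv (π g) _]

end Key

section Fam

variable {G : Type*} [Group G]

/-- Pushforward of semidirect amenability along an automorphism. -/
theorem sda_map (ϕ : G ≃* G) {N : Subgroup G} (h : SemidirectAmenable N) :
    SemidirectAmenable (N.map ϕ.toMonoidHom) := by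
  obtain ⟨m, h1, h2, h3⟩ := h
  refine ⟨⟨fun A => m.m (ϕ ⁻¹' A), fun A => m.nonneg _, by simpa using m.total,
    fun A B hd => m.fin_add _ _ (hd.preimage _)⟩, ?_, ?_, ?_⟩
  · show m.m (ϕ ⁻¹' ↑(N.map ϕ.toMonoidHom)) = 1
    have hpre : (ϕ ⁻¹' ↑(N.map ϕ.toMonoidHom)) = ↑N := by
      ext x
      simp only [Set.mem_preimage, SetLike.mem_coe, Subgroup.mem_map]
      constructor
      · rintro ⟨n, hn, he⟩
        have : n = x := ϕ.injective he
        rwa [← this]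
      · intro hx
        exact ⟨x, hx, rfl⟩
    rw [hpre, h1]
  · intro n' hn' A
    obtain ⟨n, hn, rfl⟩ := Subgroup.mem_map.1 hn'
    show m.m (ϕ ⁻¹' ((fun x => ϕ.toMonoidHom n * x) '' A)) = m.m (ϕ ⁻¹' A)
    have hset : ϕ ⁻¹' ((fun x => ϕ.toMonoidHom n * x) '' A)
        = (fun x => n * x) '' (ϕ ⁻¹' A) := by
      ext x
      rw [Set.mem_preimage, mem_lmul_image, mem_lmul_image, Set.mem_preimage]
      have : (ϕ.toMonoidHom n)⁻¹ * ϕ x = ϕ (n⁻¹ * x) := by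
        rw [map_mul, map_inv]
        rfl
      rw [this]
    rw [hset, h2 n hn]
  · intro g A
    show m.m (ϕ ⁻¹' ((fun x => g * x * g⁻¹) '' A)) = m.m (ϕ ⁻¹' A)
    have hset : ϕ ⁻¹' ((fun x => g * x * g⁻¹) '' A)
        = (fun x => ϕ.symm g * x * (ϕ.symm g)⁻¹) '' (ϕ ⁻¹' A) := by
      ext x
      rw [Set.mem_preimage, mem_conj_image, mem_conj_image, Set.mem_preimage]
      have : g⁻¹ * ϕ x * g = ϕ ((ϕ.symm g)⁻¹ * x * ϕ.symm g) := by
        rw [map_mul, map_mul, map_inv, MulEquiv.apply_symm_apply]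
      rw [this]
    rw [hset, h3 (ϕ.symm g) (ϕ ⁻¹' A)]

/-- Join of a finite subfamily. -/
noncomputable def famSup {S : Set (Subgroup G)} (T : Finset ↥S) : Subgroup G :=
  T.sup (fun N => (N : Subgroup G))

theorem famSup_mono {S : Set (Subgroup G)} {T₁ T₂ : Finset ↥S} (h : T₁ ⊆ T₂) :
    famSup T₁ ≤ famSup T₂ := Finset.sup_mono h

/-- Families of normal semidirectly amenable subgroups generate semidirectly amenable
(normal) subgroups, and every element lies in a finite join. -/
theorem sda_closure_family {S : Set (Subgroup G)}
    (h : ∀ N ∈ S, N.Normal ∧ SemidirectAmenable N) :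
    (Subgroup.closure (⋃ N ∈ S, (N : Set G))).Normal ∧
    SemidirectAmenable (Subgroup.closure (⋃ N ∈ S, (N : Set G))) ∧
    (∀ a ∈ Subgroup.closure (⋃ N ∈ S, (N : Set G)),
      ∃ T : Finset (Subgroup G), (↑T ⊆ S) ∧ a ∈ T.sup id) := by
  classical
  have hdir : Directed (· ≤ ·) (famSup (S := S)) := by
    intro T₁ T₂
    exact ⟨T₁ ∪ T₂, famSup_mono Finset.subset_union_left,
      famSup_mono Finset.subset_union_right⟩
  haveI : Nonempty (Finset ↥S) := ⟨∅⟩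
  have hprops : ∀ T : Finset ↥S, (famSup T).Normal ∧ SemidirectAmenable (famSup T) := by
    intro T
    induction T using Finset.induction_on with
    | empty =>
      constructor
      · have hbot : famSup (∅ : Finset ↥S) = ⊥ := Finset.sup_empty
        rw [hbot]
        infer_instance
      · have hbot : famSup (∅ : Finset ↥S) = ⊥ := Finset.sup_empty
        rw [hbot]
        exact sda_bot
    | insert N T hna ih =>
      have hsup : famSup (insert N T) = ↑N ⊔ famSup T := Finset.sup_insert
      rw [hsup]
      haveI hNn : (N : Subgroup G).Normal := (h N N.2).1
      haveI hJTn : (famSup T).Normal := ih.1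
      exact ⟨Subgroup.sup_normal _ _, sda_sup ih.1 (h N N.2).2 ih.2⟩
  have hclos : Subgroup.closure (⋃ N ∈ S, (N : Set G)) = ⨆ T : Finset ↥S, famSup T := by
    apply le_antisymm
    · rw [Subgroup.closure_le]
      intro x hx
      rw [Set.mem_iUnion₂] at hx
      obtain ⟨N, hNS, hxN⟩ := hx
      have hmem : x ∈ famSup ({⟨N, hNS⟩} : Finset ↥S) := by
        have hsing : famSup ({⟨N, hNS⟩} : Finset ↥S) = N := Finset.sup_singleton
        rw [hsing]
        exact hxN
      exact SetLike.mem_coe.2 ((Subgroup.mem_iSup_of_directed hdir).2 ⟨_, hmem⟩)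
    · refine iSup_le (fun T => ?_)
      refine Finset.sup_le (fun N _ => ?_)
      intro x hx
      exact Subgroup.subset_closure (Set.mem_iUnion₂.2 ⟨N, N.2, hx⟩)
  refine ⟨?_, ?_, ?_⟩
  · rw [hclos]
    constructor
    intro n hn g
    obtain ⟨T, hT⟩ := (Subgroup.mem_iSup_of_directed hdir).1 hn
    exact (le_iSup (famSup (S := S)) T) ((hprops T).1.conj_mem n hT g)
  · rw [hclos]
    exact sda_iSup hdir (fun T => (hprops T).2)
  · intro a ha
    rw [hclos] at ha
    obtain ⟨T, hT⟩ := (Subgroup.mem_iSup_of_directed hdir).1 ha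
    refine ⟨T.image Subtype.val, ?_, ?_⟩
    · intro N hN
      rw [Finset.coe_image] at hN
      obtain ⟨M, _, rfl⟩ := hN
      exact M.2
    · have hle : famSup T ≤ (T.image Subtype.val).sup id := by
        have himg : (T.image (Subtype.val : ↥S → Subgroup G)).sup id
            = T.sup (id ∘ (Subtype.val : ↥S → Subgroup G)) := Finset.sup_image _ _ _
        rw [himg]
        exact le_of_eq rfl
      exact hle hT

/-- Means concentrated on an infinite subgroup with translation invariance are atomless. -/
theorem atomless_of_infinite (m : Mean G) {N : Subgroup G}
    (hm1 : m.m (N : Set G) = 1)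
    (hinv : ∀ n ∈ N, ∀ A : Set G, m.m ((fun x => n * x) '' A) = m.m A)
    (hinf : (N : Set G).Infinite) : ∀ g : G, m.m {g} = 0 := by
  classical
  intro g
  by_contra hne
  have hpos : 0 < m.m {g} := lt_of_le_of_ne (m.nonneg _) (Ne.symm hne)
  obtain ⟨k, hk⟩ := exists_nat_gt (1 / m.m {g})
  obtain ⟨T, hTsub, hTcard⟩ := hinf.exists_subset_card_eq k
  have hsingle : ∀ n ∈ N, m.m {n * g} = m.m {g} := by
    intro n hn
    have : ({n * g} : Set G) = (fun x => n * x) '' {g} := by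
      rw [Set.image_singleton]
    rw [this, hinv n hn]
  have hsum : ∀ T' : Finset G, (↑T' ⊆ (N : Set G)) →
      m.m (⋃ n ∈ T', {n * g}) = (T'.card : ℝ) * m.m {g} := by
    intro T'
    induction T' using Finset.induction_on with
    | empty => intro _; simp [m.empty]
    | insert n T' hna ih =>
      intro hsub
      have hnN : n ∈ (N : Set G) := hsub (Finset.mem_insert_self n T')
      have hT'N : ↑T' ⊆ (N : Set G) := fun x hx => hsub (Finset.mem_insert_of_mem hx)
      have hun : (⋃ x ∈ insert n T', ({x * g} : Set G))
          = {n * g} ∪ ⋃ x ∈ T', ({x * g} : Set G) := by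
        simp [Set.biUnion_insert]
      have hdj : Disjoint ({n * g} : Set G) (⋃ x ∈ T', ({x * g} : Set G)) := by
        rw [Set.disjoint_left]
        rintro y hy1 hy2
        rw [Set.mem_singleton_iff] at hy1
        rw [Set.mem_iUnion₂] at hy2
        obtain ⟨x, hxT, hy⟩ := hy2
        rw [Set.mem_singleton_iff] at hy
        have : x = n := by
          have hxy : x * g = n * g := hy.symm.trans hy1
          exact mul_right_cancel hxy
        exact hna (this ▸ hxT)
      rw [hun, m.fin_add _ _ hdj, ih hT'N, hsingle n hnN, Finset.card_insert_of_notMem hna]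
      push_cast
      ring
  have hle1 := m.le_one (⋃ n ∈ T, ({n * g} : Set G))
  rw [hsum T hTsub, hTcard] at hle1
  have hgt : 1 < (k : ℝ) * m.m {g} := by
    rw [div_lt_iff₀ hpos] at hk
    linarith
  linarith

end Fam

section Assembly

variable {G : Type*} [Group G]

theorem centralizer_map_equiv (ϕ : G ≃* G) (N : Subgroup G) :
    Subgroup.centralizer ((N.map ϕ.toMonoidHom : Subgroup G) : Set G)
      = (Subgroup.centralizer (N : Set G)).map ϕ.toMonoidHom := by
  ext g
  rw [Subgroup.mem_centralizer_iff, Subgroup.mem_map]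
  constructor
  · intro hg
    refine ⟨ϕ.symm g, ?_, by simp⟩
    rw [Subgroup.mem_centralizer_iff]
    intro h hh
    have hmem : ϕ h ∈ ((N.map ϕ.toMonoidHom : Subgroup G) : Set G) :=
      SetLike.mem_coe.2 (Subgroup.mem_map.2 ⟨h, hh, rfl⟩)
    have hcomm := hg (ϕ h) hmem
    apply ϕ.injective
    rw [map_mul, map_mul, MulEquiv.apply_symm_apply]
    exact hcomm
  · rintro ⟨c, hc, rfl⟩
    intro h hh
    obtain ⟨n, hn, rfl⟩ := Subgroup.mem_map.1 (SetLike.mem_coe.1 hh)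
    rw [Subgroup.mem_centralizer_iff] at hc
    have hcomm := hc n hn
    show ϕ.toMonoidHom n * ϕ.toMonoidHom c = ϕ.toMonoidHom c * ϕ.toMonoidHom n
    rw [← map_mul, ← map_mul, hcomm]

theorem char_of_stable (S : Set (Subgroup G))
    (hstab : ∀ (ϕ : G ≃* G), ∀ N ∈ S, N.map ϕ.toMonoidHom ∈ S) :
    (Subgroup.closure (⋃ N ∈ S, (N : Set G))).Characteristic := by
  rw [Subgroup.characteristic_iff_map_le]
  intro ϕ
  rw [MonoidHom.map_closure]
  apply Subgroup.closure_mono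
  rintro x ⟨y, hy, rfl⟩
  rw [Set.mem_iUnion₂] at hy
  obtain ⟨N, hN, hyN⟩ := hy
  rw [Set.mem_iUnion₂]
  exact ⟨N.map ϕ.toMonoidHom, hstab ϕ N hN,
    SetLike.mem_coe.2 (Subgroup.mem_map.2 ⟨y, hyN, rfl⟩)⟩

theorem sac_stable (ϕ : G ≃* G) {N : Subgroup G}
    (hN : N.Normal ∧ AmenableQuotientBy (Subgroup.centralizer (N : Set G))) :
    (N.map ϕ.toMonoidHom).Normal ∧
      AmenableQuotientBy (Subgroup.centralizer ((N.map ϕ.toMonoidHom : Subgroup G) : Set G)) := by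
  refine ⟨hN.1.map ϕ.toMonoidHom ϕ.surjective, ?_⟩
  intro instN'
  haveI instC : (Subgroup.centralizer (N : Set G)).Normal := centralizer_normal hN.1
  have hQG : AmenableGroup (G ⧸ Subgroup.centralizer (N : Set G)) := hN.2
  have hle : Subgroup.centralizer (N : Set G)
      ≤ (Subgroup.centralizer ((N.map ϕ.toMonoidHom : Subgroup G) : Set G)).comap
          ϕ.toMonoidHom := by
    intro c hc
    rw [Subgroup.mem_comap, centralizer_map_equiv]
    exact Subgroup.mem_map.2 ⟨c, hc, rfl⟩
  set f := QuotientGroup.map (Subgroup.centralizer (N : Set G))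
    (Subgroup.centralizer ((N.map ϕ.toMonoidHom : Subgroup G) : Set G)) ϕ.toMonoidHom hle
    with hf
  have hsurj : Function.Surjective f := by
    intro y
    obtain ⟨x, rfl⟩ := QuotientGroup.mk'_surjective _ y
    refine ⟨QuotientGroup.mk (ϕ.symm x), ?_⟩
    rw [hf, QuotientGroup.map_mk]
    show QuotientGroup.mk (ϕ (ϕ.symm x)) = _
    rw [MulEquiv.apply_symm_apply]
    rfl
  exact AmenableGroup.of_surjective f hsurj hQG

theorem si_stable (ϕ : G ≃* G) {N : Subgroup G}
    (hN : N.Normal ∧ SemidirectAmenable N) :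
    (N.map ϕ.toMonoidHom).Normal ∧ SemidirectAmenable (N.map ϕ.toMonoidHom) :=
  ⟨hN.1.map ϕ.toMonoidHom ϕ.surjective, sda_map ϕ hN.2⟩

end Assembly

/-- Theorem: parts i.-v. of the structure theorem for the AC-center and inner radical. -/
theorem ACCenter_innerRadical_structure (G : Type*) [Group G] [Countable G] :
    -- i.
    (AmenableGroup ↥(ACCenter G) ∧ (ACCenter G).Characteristic ∧
      AmenableGroup ↥(InnerRadical G) ∧ (InnerRadical G).Characteristic) ∧
    -- ii.
    ACCenter G ≤ InnerRadical G ∧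
    -- iii.
    (SemidirectAmenable (ACCenter G) ∧ SemidirectAmenable (InnerRadical G)) ∧
    -- iv.
    (∀ [_inst : (Subgroup.centralizer ((ACCenter G : Subgroup G) : Set G)).Normal],
      ResiduallyAmenable (G ⧸ Subgroup.centralizer ((ACCenter G : Subgroup G) : Set G))) ∧
    -- v.
    (((InnerRadical G : Subgroup G) : Set G).Infinite → InnerAmenable G) := by
  classical
  set SI : Set (Subgroup G) := {N : Subgroup G | N.Normal ∧ SemidirectAmenable N} with hSIdef
  set SAC : Set (Subgroup G) := {N : Subgroup G | N.Normal ∧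
    AmenableQuotientBy (Subgroup.centralizer (N : Set G))} with hSACdef
  have hSACmem : ∀ N ∈ SAC, N.Normal ∧ SemidirectAmenable N := by
    intro N hN
    exact ⟨hN.1, sda_of_centralizer_quotient_amenable hN.1 hN.2⟩
  have hSImem : ∀ N ∈ SI, N.Normal ∧ SemidirectAmenable N := fun N hN => hN
  have hIeq : InnerRadical G = Subgroup.closure (⋃ N ∈ SI, (N : Set G)) := rfl
  have hACeq : ACCenter G = Subgroup.closure (⋃ N ∈ SAC, (N : Set G)) := rfl
  obtain ⟨hInorm, hIsda, hIfin⟩ := sda_closure_family hSImem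
  obtain ⟨hACnorm, hACsda, hACfin⟩ := sda_closure_family hSACmem
  rw [← hIeq] at hInorm hIsda hIfin
  rw [← hACeq] at hACnorm hACsda hACfin
  have hACI : ACCenter G ≤ InnerRadical G := by
    rw [hIeq, hACeq]
    apply Subgroup.closure_mono
    refine Set.iUnion₂_subset (fun N hN => ?_)
    exact Set.subset_iUnion₂ (s := fun (N : Subgroup G) (_ : N ∈ SI) => (N : Set G)) N
      (hSACmem N hN)
  refine ⟨⟨(sda_relMean hACsda).amenable, ?_, (sda_relMean hIsda).amenable, ?_⟩,
    hACI, ⟨hACsda, hIsda⟩, ?_, ?_⟩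
  · -- AC characteristic
    rw [hACeq]
    exact char_of_stable SAC (fun ϕ N hN => sac_stable ϕ hN)
  · -- I characteristic
    rw [hIeq]
    exact char_of_stable SI (fun ϕ N hN => si_stable ϕ hN)
  · -- iv. residual amenability
    intro inst g hg
    obtain ⟨x, rfl⟩ := QuotientGroup.mk'_surjective _ g
    have hx : x ∉ Subgroup.centralizer ((ACCenter G : Subgroup G) : Set G) := by
      intro hc
      exact hg ((QuotientGroup.eq_one_iff x).2 hc)
    rw [Subgroup.mem_centralizer_iff] at hx
    push_neg at hx
    obtain ⟨a, haAC, hax⟩ := hx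
    obtain ⟨T, hTsub, haT⟩ := hACfin a (SetLike.mem_coe.1 haAC)
    have hexN : ∃ N ∈ T, ¬ (N : Subgroup G) ≤ Subgroup.centralizer {x} := by
      by_contra hall
      push_neg at hall
      have hTle : T.sup id ≤ Subgroup.centralizer {x} :=
        Finset.sup_le (fun N hN => hall N hN)
      have hamem := hTle haT
      have hcomm := Subgroup.mem_centralizer_iff.1 hamem x (Set.mem_singleton x)
      exact hax hcomm.symm
    obtain ⟨N, hNT, hNle⟩ := hexN
    have hNS : N ∈ SAC := hTsub hNT
    haveI instCN : (Subgroup.centralizer (N : Set G)).Normal := centralizer_normal hNS.1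
    have hamen : AmenableGroup (G ⧸ Subgroup.centralizer (N : Set G)) := hNS.2
    have hNAC : N ≤ ACCenter G := by
      rw [hACeq]
      intro y hy
      exact Subgroup.subset_closure (Set.mem_iUnion₂.2 ⟨N, hNS, hy⟩)
    have hle : Subgroup.centralizer ((ACCenter G : Subgroup G) : Set G)
        ≤ Subgroup.centralizer (N : Set G) :=
      Subgroup.centralizer_le (SetLike.coe_subset_coe.2 hNAC)
    have hle' : Subgroup.centralizer ((ACCenter G : Subgroup G) : Set G)
        ≤ (Subgroup.centralizer (N : Set G)).comap (MonoidHom.id G) := hle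
    refine ⟨GrpCat.of (G ⧸ Subgroup.centralizer (N : Set G)), hamen,
      QuotientGroup.map _ _ (MonoidHom.id G) hle', ?_⟩
    intro h1
    have hxC : x ∈ Subgroup.centralizer (N : Set G) := by
      have h2 : (QuotientGroup.mk (MonoidHom.id G x) : G ⧸ Subgroup.centralizer (N : Set G))
          = 1 := by
        rw [← QuotientGroup.map_mk _ _ (MonoidHom.id G) hle' x]
        exact h1
      simpa using (QuotientGroup.eq_one_iff (MonoidHom.id G x)).1 h2
    apply hNle
    intro n hn
    rw [Subgroup.mem_centralizer_iff]
    intro h hh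
    rw [Set.mem_singleton_iff] at hh
    subst hh
    exact (Subgroup.mem_centralizer_iff.1 hxC n hn).symm
  · -- v. inner amenability
    intro hinf
    obtain ⟨m, hm1, hm2, hm3⟩ := hIsda
    exact ⟨m, atomless_of_infinite m hm1 hm2 hinf, hm3⟩
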